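/- arXiv:1407.4053 — 7 statements merged into one kernel-verified Lean document; each statement's English description precedes it below -/
import Mathlib

section
/- Let Γ = A ∗ B be a free product and let f_A, f_B be alternating quasimorphisms on A and B respectively. Then the split quasimorphism f = f_A ∗ f_B defined by summing the values of f_A and f_B on the syllables of the normal form is an alternating quasimorphism on Γ whose defect equals max{D(f_A), D(f_B)}. -/
/-- The value of a split quasimorphism `f_A ∗ f_B` on an element of the free product
`A ∗ B` (here the binary free product is realized as `Monoid.CoprodI G` over `Bool`,
with `A = G true`, `B = G false`): it is the sum of the values of the `f b`'s on the
syllables of the normal form. -/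
noncomputable def splitQM {G : Bool → Type*} [∀ b, Group (G b)]
    (f : ∀ b, G b → ℝ) (g : Monoid.CoprodI G) : ℝ := by
  classical
  exact ((Monoid.CoprodI.Word.equiv g).toList.map fun l => f l.1 l.2).sum

/-- The defect of a real-valued function on a group. -/
noncomputable def defect {G : Type*} [Group G] (f : G → ℝ) : ℝ :=
  ⨆ p : G × G, |f (p.1 * p.2) - f p.1 - f p.2|

section Aux

open Monoid Monoid.CoprodI

variable {G : Bool → Type*} [∀ b, Group (G b)] [∀ b, DecidableEq (G b)]

/-- The normal-form list of syllables of an element of the free product. -/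
noncomputable def wlist (g : Monoid.CoprodI G) : List (Σ b, G b) :=
  (Monoid.CoprodI.Word.equiv g).toList

lemma wlist_prod (L : List (Σ b, G b)) (h1 : ∀ l ∈ L, l.2 ≠ 1)
    (h2 : L.Chain' fun a b => a.1 ≠ b.1) :
    wlist ((L.map fun l => Monoid.CoprodI.of l.2).prod) = L := by
  have : ((⟨L, h1, h2⟩ : Word G) : Word G).prod = (L.map fun l => Monoid.CoprodI.of l.2).prod :=
    rfl
  rw [wlist, ← this]
  have := Word.equiv.apply_symm_apply (⟨L, h1, h2⟩ : Word G)
  have hsymm : Word.equiv.symm (⟨L, h1, h2⟩ : Word G) = (⟨L, h1, h2⟩ : Word G).prod := rfl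
  rw [hsymm] at this
  rw [this]

lemma prod_wlist (g : Monoid.CoprodI G) :
    ((wlist g).map fun l => Monoid.CoprodI.of l.2).prod = g := by
  have : ((wlist g).map fun l => Monoid.CoprodI.of l.2).prod = (Word.equiv g).prod := rfl
  rw [this]
  have : (Word.equiv g).prod = Word.equiv.symm (Word.equiv g) := rfl
  rw [this, Equiv.symm_apply_apply]

lemma wlist_ne_one (g : Monoid.CoprodI G) : ∀ l ∈ wlist g, l.2 ≠ 1 :=
  (Word.equiv g).ne_one

lemma wlist_chain (g : Monoid.CoprodI G) :
    (wlist g).Chain' fun a b => a.1 ≠ b.1 :=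
  (Word.equiv g).chain_ne

lemma wlist_one : wlist (1 : Monoid.CoprodI G) = [] := by
  have := wlist_prod (G := G) [] (by simp) (by simp [List.Chain'])
  simpa using this

lemma eq_one_of_wlist_nil {g : Monoid.CoprodI G} (h : wlist g = []) : g = 1 := by
  have := prod_wlist g
  rw [h] at this
  simpa using this.symm

lemma wlist_of {b : Bool} {x : G b} (hx : x ≠ 1) :
    wlist (Monoid.CoprodI.of x) = [⟨b, x⟩] := by
  have := wlist_prod (G := G) [⟨b, x⟩] (by simpa using hx) (by simp [List.Chain'])
  simpa using this

end Aux

/-- **Split quasimorphisms.** If `f_A`, `f_B` are alternating quasimorphisms on `A` and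
`B`, then the split quasimorphism `f_A ∗ f_B` on `Γ = A ∗ B` is an alternating
quasimorphism whose defect equals `max (D(f_A)) (D(f_B))`. -/
theorem splitQM_alternating_quasimorphism_defect {G : Bool → Type*} [∀ b, Group (G b)]
    (f : ∀ b, G b → ℝ)
    (hqm : ∀ b, ∃ C : ℝ, ∀ x y : G b, |f b (x * y) - f b x - f b y| ≤ C)
    (halt : ∀ b, ∀ x : G b, f b x + f b x⁻¹ = 0) :
    (∀ g : Monoid.CoprodI G, splitQM f g + splitQM f g⁻¹ = 0) ∧
    (∃ C : ℝ, ∀ g h : Monoid.CoprodI G, |splitQM f (g * h) - splitQM f g - splitQM f h| ≤ C) ∧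
    defect (splitQM f) = max (defect (f true)) (defect (f false)) := by
  classical
  open Monoid Monoid.CoprodI in
  -- rewrite splitQM using wlist
  have hsplit : ∀ g : Monoid.CoprodI G,
      splitQM f g = ((wlist g).map fun l => f l.1 l.2).sum := by
    intro g; unfold splitQM wlist; congr!
  set S : Monoid.CoprodI G → ℝ := fun g => ((wlist g).map fun l => f l.1 l.2).sum with hS
  have hf1 : ∀ b, f b (1 : G b) = 0 := by
    intro b
    have := halt b 1
    simp only [inv_one] at this
    linarith
  have hfinv : ∀ b (x : G b), f b x⁻¹ = -(f b x) := by
    intro b x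
    have := halt b x
    linarith
  -- alternation
  have alt : ∀ g : Monoid.CoprodI G, S g + S g⁻¹ = 0 := by
    intro g
    have hL : wlist g⁻¹ = ((wlist g).map fun l => (⟨l.1, l.2⁻¹⟩ : Σ b, G b)).reverse := by
      rw [← wlist_prod (((wlist g).map fun l => (⟨l.1, l.2⁻¹⟩ : Σ b, G b)).reverse) ?_ ?_]
      · congr 1
        rw [List.map_reverse, List.map_map]
        have : ((wlist g).map ((fun l : Σ b, G b => Monoid.CoprodI.of l.2) ∘
            (fun l : Σ b, G b => (⟨l.1, l.2⁻¹⟩ : Σ b, G b)))) =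
            ((wlist g).map fun l => Monoid.CoprodI.of l.2).map fun x => x⁻¹ := by
          rw [List.map_map]
          apply List.map_congr_left
          intro l _
          simp [Function.comp]
        rw [this, ← List.prod_inv_reverse, prod_wlist]
      · intro l hl
        rw [List.mem_reverse, List.mem_map] at hl
        obtain ⟨a, ha, rfl⟩ := hl
        simpa using wlist_ne_one g a ha
      · rw [List.Chain', List.isChain_reverse, List.isChain_map]
        have := wlist_chain g
        exact List.IsChain.imp (fun a b h => by exact fun h' => h h'.symm) this
    rw [hS]
    simp only
    rw [hL, List.map_reverse, List.sum_reverse, List.map_map]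
    have : ((wlist g).map ((fun l : Σ b, G b => f l.1 l.2) ∘
        (fun l : Σ b, G b => (⟨l.1, l.2⁻¹⟩ : Σ b, G b)))) =
        (wlist g).map fun l => -(f l.1 l.2) := by
      apply List.map_congr_left
      intro l _
      simp [Function.comp, hfinv]
    rw [this]
    have : ((wlist g).map fun l => -(f l.1 l.2)).sum = -((wlist g).map fun l => f l.1 l.2).sum := by
      induction wlist g with
      | nil => simp
      | cons a L ih => simp [ih]; ring
    rw [this]; ring
  -- the key quasimorphism bound
  have key : ∀ D : ℝ, 0 ≤ D → (∀ b (x y : G b), |f b (x * y) - f b x - f b y| ≤ D) →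
      ∀ g h : Monoid.CoprodI G, |S (g * h) - S g - S h| ≤ D := by
    intro D hD0 hD
    suffices H : ∀ n (g h : Monoid.CoprodI G), (wlist g).length ≤ n →
        |S (g * h) - S g - S h| ≤ D by
      intro g h; exact H (wlist g).length g h le_rfl
    intro n
    induction n with
    | zero =>
      intro g h hlen
      have hg : g = 1 := eq_one_of_wlist_nil (List.eq_nil_of_length_eq_zero (Nat.le_zero.mp hlen))
      subst hg
      simp only [one_mul, hS, wlist_one]
      simpa using hD0
    | succ n ih =>
      intro g h hlen
      rcases List.eq_nil_or_concat (wlist g) with hgnil | ⟨P, x, hPx⟩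
      rotate_left
      rw [List.concat_eq_append] at hPx
      rotate_left
      · have hg : g = 1 := eq_one_of_wlist_nil hgnil
        subst hg
        simp only [one_mul, hS, wlist_one]
        simpa using hD0
      rcases List.eq_nil_or_concat (wlist h) with hhnil | _
      · have hh : h = 1 := eq_one_of_wlist_nil hhnil
        subst hh
        simp only [mul_one, hS, wlist_one]
        simpa using hD0
      obtain ⟨y, Q, hyQ⟩ : ∃ y Q, wlist h = y :: Q := by
        cases hwh : wlist h with
        | nil => exact absurd hwh (by rename_i hne; rcases hne with ⟨_, _, h'⟩; simp [h'])
        | cons a L => exact ⟨a, L, rfl⟩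
      -- basic facts
      have hgprod : g = (P.map fun l => Monoid.CoprodI.of l.2).prod * Monoid.CoprodI.of x.2 := by
        conv_lhs => rw [← prod_wlist g]
        rw [hPx]; simp
      have hhprod : h = Monoid.CoprodI.of y.2 * (Q.map fun l => Monoid.CoprodI.of l.2).prod := by
        conv_lhs => rw [← prod_wlist h]
        rw [hyQ]; simp
      have hgchain := wlist_chain g
      have hhchain := wlist_chain h
      rw [hPx] at hgchain
      rw [hyQ] at hhchain
      have hgne := wlist_ne_one g
      have hhne := wlist_ne_one h
      rw [hPx] at hgne; rw [hyQ] at hhne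
      have hPchain : P.Chain' fun a b => a.1 ≠ b.1 := (List.isChain_append.mp hgchain).1
      have hQchain : Q.Chain' fun a b => a.1 ≠ b.1 := hhchain.tail
      have hPne : ∀ l ∈ P, l.2 ≠ 1 := fun l hl => hgne l (by simp [hl])
      have hQne : ∀ l ∈ Q, l.2 ≠ 1 := fun l hl => hhne l (by simp [hl])
      have hxne : x.2 ≠ 1 := hgne x (by simp)
      have hyne : y.2 ≠ 1 := hhne y (by simp)
      have hPlast : ∀ a ∈ P.getLast?, a.1 ≠ x.1 := by
        have := (List.isChain_append.mp hgchain).2.2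
        intro a ha
        exact this a ha x (by simp)
      have hQhead : ∀ b ∈ Q.head?, y.1 ≠ b.1 := by
        intro b hb
        exact (List.isChain_cons.mp hhchain).1 b hb
      by_cases hij : x.1 = y.1
      · -- same index: merge or cancel
        obtain ⟨i, xa⟩ := x
        obtain ⟨j, ya⟩ := y
        simp only at hij
        subst hij
        by_cases hxy : xa * ya = 1
        · -- cancellation
          have hya : ya = xa⁻¹ := (inv_eq_of_mul_eq_one_right hxy).symm
          set g' := (P.map fun l => Monoid.CoprodI.of l.2).prod with hg'
          set h' := (Q.map fun l => Monoid.CoprodI.of l.2).prod with hh'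
          have hwg' : wlist g' = P := wlist_prod P hPne hPchain
          have hwh' : wlist h' = Q := wlist_prod Q hQne hQchain
          have hgh : g * h = g' * h' := by
            rw [hgprod, hhprod, hg', hh']
            have : (Monoid.CoprodI.of xa : Monoid.CoprodI G) * Monoid.CoprodI.of ya = 1 := by
              rw [← map_mul, hxy, map_one]
            rw [mul_assoc, ← mul_assoc (Monoid.CoprodI.of xa), this, one_mul]
          have hSg : S g = S g' + f i xa := by
            simp only [hS, hPx, hwg', List.map_append, List.sum_append]
            simp
          have hSh : S h = f i ya + S h' := by
            simp only [hS, hyQ, hwh', List.map_cons, List.sum_cons]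
          have hcancel : f i xa + f i ya = 0 := by
            rw [hya]; exact halt i xa
          have hlen' : (wlist g').length ≤ n := by
            rw [hwg']
            have : (wlist g).length = P.length + 1 := by rw [hPx]; simp
            omega
          have := ih g' h' hlen'
          rw [hgh, hSg, hSh]
          calc |S (g' * h') - (S g' + f i xa) - (f i ya + S h')|
              = |S (g' * h') - S g' - S h'| := by
                have : f i ya = -(f i xa) := by linarith
                rw [this]; ring_nf
            _ ≤ D := this
        · -- merge
          have hmerge : wlist (g * h) = P ++ (⟨i, xa * ya⟩ :: Q) := by
            rw [← wlist_prod (P ++ (⟨i, xa * ya⟩ :: Q)) ?_ ?_]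
            · congr 1
              rw [hgprod, hhprod, List.map_append, List.prod_append, List.map_cons,
                List.prod_cons]
              simp only
              rw [map_mul]
              group
            · intro l hl
              rcases List.mem_append.mp hl with hl | hl
              · exact hPne l hl
              · rcases List.mem_cons.mp hl with rfl | hl
                · simpa using hxy
                · exact hQne l hl
            · rw [List.Chain', List.isChain_append]
              refine ⟨hPchain, ?_, ?_⟩
              · exact List.isChain_cons.mpr ⟨hQhead, hQchain⟩
              · intro a ha b hb
                simp only [List.head?_cons, Option.mem_def, Option.some.injEq] at hb
                subst hb
                exact hPlast a ha
          have hSgh : S (g * h) = (P.map fun l => f l.1 l.2).sum + f i (xa * ya) +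
              (Q.map fun l => f l.1 l.2).sum := by
            simp only [hS, hmerge, List.map_append, List.sum_append, List.map_cons,
              List.sum_cons]
            ring
          have hSg : S g = (P.map fun l => f l.1 l.2).sum + f i xa := by
            simp only [hS, hPx, List.map_append, List.sum_append]
            simp
          have hSh : S h = f i ya + (Q.map fun l => f l.1 l.2).sum := by
            simp only [hS, hyQ, List.map_cons, List.sum_cons]
          rw [hSgh, hSg, hSh]
          calc |(P.map fun l => f l.1 l.2).sum + f i (xa * ya) +
                (Q.map fun l => f l.1 l.2).sum -
                ((P.map fun l => f l.1 l.2).sum + f i xa) -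
                (f i ya + (Q.map fun l => f l.1 l.2).sum)|
              = |f i (xa * ya) - f i xa - f i ya| := by ring_nf
            _ ≤ D := hD i xa ya
      · -- different indices: no interaction
        have hcat : wlist (g * h) = (P ++ [x]) ++ (y :: Q) := by
          rw [← wlist_prod ((P ++ [x]) ++ (y :: Q)) ?_ ?_]
          · congr 1
            rw [hgprod, hhprod, List.map_append, List.prod_append]
            rw [List.map_append, List.prod_append, List.map_cons, List.prod_cons]
            simp [mul_assoc]
          · intro l hl
            rcases List.mem_append.mp hl with hl | hl
            · exact hgne l hl
            · exact hhne l hl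
          · rw [List.Chain', List.isChain_append]
            refine ⟨hgchain, hhchain, ?_⟩
            intro a ha b hb
            rw [List.getLast?_concat] at ha
            rw [Option.mem_def, Option.some.injEq] at ha
            rw [List.head?_cons, Option.mem_def, Option.some.injEq] at hb
            subst ha; subst hb
            exact hij
        have : S (g * h) = S g + S h := by
          simp only [hS, hcat, hPx, hyQ, List.map_append, List.sum_append]
        rw [this]
        simpa using hD0
  -- set up defect facts
  have hbdd : ∀ b, BddAbove (Set.range fun p : G b × G b =>
      |f b (p.1 * p.2) - f b p.1 - f b p.2|) := by
    intro b
    obtain ⟨C, hC⟩ := hqm b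
    exact ⟨C, by rintro _ ⟨p, rfl⟩; exact hC p.1 p.2⟩
  have hdle : ∀ b (x y : G b), |f b (x * y) - f b x - f b y| ≤ defect (f b) := by
    intro b x y
    exact le_ciSup (hbdd b) (⟨x, y⟩ : G b × G b)
  have hd0 : ∀ b, 0 ≤ defect (f b) := by
    intro b
    have := hdle b 1 1
    simp only [mul_one, hf1, sub_zero, sub_self, abs_zero] at this
    exact this
  set Dm := max (defect (f true)) (defect (f false)) with hDm
  have hDm0 : 0 ≤ Dm := le_trans (hd0 true) (le_max_left _ _)
  have hDmb : ∀ b (x y : G b), |f b (x * y) - f b x - f b y| ≤ Dm := by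
    intro b x y
    cases b
    · exact le_trans (hdle false x y) (le_max_right _ _)
    · exact le_trans (hdle true x y) (le_max_left _ _)
  have hkey := key Dm hDm0 hDmb
  -- S of a single generator
  have hSof : ∀ b (x : G b), S (Monoid.CoprodI.of x) = f b x := by
    intro b x
    by_cases hx : x = 1
    · subst hx
      simp only [hS, map_one, wlist_one, List.map_nil, List.sum_nil, hf1]
    · simp [hS, wlist_of hx]
  refine ⟨?_, ⟨Dm, ?_⟩, ?_⟩
  · intro g
    rw [hsplit, hsplit]
    exact alt g
  · intro g h
    rw [hsplit, hsplit, hsplit]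
    exact hkey g h
  · have hsame : ∀ g : Monoid.CoprodI G, splitQM f g = S g := hsplit
    have hbddS : BddAbove (Set.range fun p : Monoid.CoprodI G × Monoid.CoprodI G =>
        |splitQM f (p.1 * p.2) - splitQM f p.1 - splitQM f p.2|) := by
      refine ⟨Dm, ?_⟩
      rintro _ ⟨p, rfl⟩
      simp only [hsame]
      exact hkey p.1 p.2
    apply le_antisymm
    · apply ciSup_le
      intro p
      simp only [hsame]
      exact hkey p.1 p.2
    · apply max_le
      · apply ciSup_le
        intro p
        have : |f true (p.1 * p.2) - f true p.1 - f true p.2| =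
            |splitQM f (Monoid.CoprodI.of p.1 * Monoid.CoprodI.of p.2) -
              splitQM f (Monoid.CoprodI.of p.1) - splitQM f (Monoid.CoprodI.of p.2)| := by
          rw [← map_mul]
          simp only [hsame, hSof]
        rw [this]
        exact le_ciSup hbddS (⟨Monoid.CoprodI.of p.1, Monoid.CoprodI.of p.2⟩ :
          Monoid.CoprodI G × Monoid.CoprodI G)
      · apply ciSup_le
        intro p
        have : |f false (p.1 * p.2) - f false p.1 - f false p.2| =
            |splitQM f (Monoid.CoprodI.of p.1 * Monoid.CoprodI.of p.2) -
              splitQM f (Monoid.CoprodI.of p.1) - splitQM f (Monoid.CoprodI.of p.2)| := by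
          rw [← map_mul]
          simp only [hsame, hSof]
        rw [this]
        exact le_ciSup hbddS (⟨Monoid.CoprodI.of p.1, Monoid.CoprodI.of p.2⟩ :
          Monoid.CoprodI G × Monoid.CoprodI G)
end

section
/- For a group Γ with infinitely many elements of order different from 2, the defect space D(Γ) of bounded alternating real-valued functions on Γ, equipped with the defect norm, is a non-separable Banach space. -/
open Filter Topology

/-- The defect norm of a real-valued function on a group. -/
noncomputable def defectNorm {G : Type*} [Group G] (f : G → ℝ) : ℝ :=
  ⨆ p : G × G, |f (p.1 * p.2) - f p.1 - f p.2|

/-- The defect space `D(Γ)`: bounded alternating real-valued functions on `Γ`. -/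
def defectSpace (Γ : Type*) [Group Γ] : Set (Γ → ℝ) :=
  {f | (∃ C : ℝ, ∀ g : Γ, |f g| ≤ C) ∧ ∀ g : Γ, f g⁻¹ = -f g}

section Aux

variable {Γ : Type*} [Group Γ]

lemma bddAbove_defect {h : Γ → ℝ} {C : ℝ} (hC : ∀ g, |h g| ≤ C) :
    BddAbove (Set.range fun p : Γ × Γ => |h (p.1 * p.2) - h p.1 - h p.2|) := by
  refine ⟨C + C + C, ?_⟩
  rintro x ⟨p, rfl⟩
  have h1 := abs_le.mp (hC (p.1 * p.2))
  have h2 := abs_le.mp (hC p.1)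
  have h3 := abs_le.mp (hC p.2)
  exact abs_le.mpr ⟨by linarith, by linarith⟩

lemma abs_defect_le {h : Γ → ℝ} {C : ℝ} (hC : ∀ g, |h g| ≤ C) (g k : Γ) :
    |h (g * k) - h g - h k| ≤ defectNorm h :=
  le_ciSup (bddAbove_defect hC) (g, k)

lemma defectNorm_nonneg {h : Γ → ℝ} {C : ℝ} (hC : ∀ g, |h g| ≤ C) : 0 ≤ defectNorm h :=
  (abs_nonneg _).trans (abs_defect_le hC 1 1)

lemma defectNorm_le {h : Γ → ℝ} {C : ℝ} (hC : ∀ g, |h g| ≤ C) :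
    defectNorm h ≤ C + C + C := by
  have hC0 : 0 ≤ C := (abs_nonneg _).trans (hC 1)
  refine Real.iSup_le (fun p => ?_) (by linarith)
  have h1 := abs_le.mp (hC (p.1 * p.2))
  have h2 := abs_le.mp (hC p.1)
  have h3 := abs_le.mp (hC p.2)
  exact abs_le.mpr ⟨by linarith, by linarith⟩

/-- The key lemma: for a *bounded* function, the sup norm is bounded by the defect norm. -/
lemma abs_le_defectNorm {h : Γ → ℝ} {C : ℝ} (hC : ∀ g, |h g| ≤ C) (g : Γ) :
    |h g| ≤ defectNorm h := by
  set D := defectNorm h with hD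
  have hC0 : 0 ≤ C := (abs_nonneg _).trans (hC 1)
  have hD0 : 0 ≤ D := defectNorm_nonneg hC
  have hkey : ∀ x : Γ, |h (x * x) - 2 * h x| ≤ D := by
    intro x
    have h1 := abs_defect_le hC x x
    have e : h (x * x) - 2 * h x = h (x * x) - h x - h x := by ring
    rw [e]; exact h1
  have hind : ∀ k : ℕ, |h (g ^ (2 ^ k)) - (2 : ℝ) ^ k * h g| ≤ ((2 : ℝ) ^ k - 1) * D := by
    intro k
    induction k with
    | zero => simp
    | succ k ih =>
      have hx : g ^ (2 ^ (k + 1)) = (g ^ (2 ^ k)) * (g ^ (2 ^ k)) := by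
        rw [← pow_add]
        congr 1
        ring
      set x := g ^ (2 ^ k) with hxdef
      have step : |h (x * x) - (2 : ℝ) ^ (k + 1) * h g|
          ≤ |h (x * x) - 2 * h x| + |2 * h x - (2 : ℝ) ^ (k + 1) * h g| := abs_sub_le _ _ _
      have e2 : |2 * h x - (2 : ℝ) ^ (k + 1) * h g| = 2 * |h x - (2 : ℝ) ^ k * h g| := by
        rw [show 2 * h x - (2 : ℝ) ^ (k + 1) * h g = 2 * (h x - (2 : ℝ) ^ k * h g) by
          rw [pow_succ]; ring, abs_mul, abs_two]
      have etot : ((2 : ℝ) ^ (k + 1) - 1) * D = D + 2 * (((2 : ℝ) ^ k - 1) * D) := by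
        rw [pow_succ]; ring
      rw [hx]
      calc |h (x * x) - (2 : ℝ) ^ (k + 1) * h g|
          ≤ |h (x * x) - 2 * h x| + |2 * h x - (2 : ℝ) ^ (k + 1) * h g| := step
        _ ≤ D + 2 * (((2 : ℝ) ^ k - 1) * D) := by
            rw [e2]
            have := hkey x
            have := ih
            linarith
        _ = ((2 : ℝ) ^ (k + 1) - 1) * D := etot.symm
  have hbd : ∀ k : ℕ, |h g| ≤ D + C / 2 ^ k := by
    intro k
    have h2k : (0 : ℝ) < 2 ^ k := pow_pos two_pos k
    have h2k' : (2 : ℝ) ^ k ≠ 0 := ne_of_gt h2k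
    have hstep : (2 : ℝ) ^ k * |h g| ≤ ((2 : ℝ) ^ k - 1) * D + C := by
      have e : (2 : ℝ) ^ k * |h g| = |(2 : ℝ) ^ k * h g| := by
        rw [abs_mul, abs_of_pos h2k]
      rw [e]
      have t1 : |(2 : ℝ) ^ k * h g| - |h (g ^ (2 ^ k))| ≤ |(2 : ℝ) ^ k * h g - h (g ^ (2 ^ k))| :=
        abs_sub_abs_le_abs_sub _ _
      have t2 : |(2 : ℝ) ^ k * h g - h (g ^ (2 ^ k))| = |h (g ^ (2 ^ k)) - (2 : ℝ) ^ k * h g| :=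
        abs_sub_comm _ _
      have t3 := hind k
      have t4 := hC (g ^ (2 ^ k))
      linarith
    have : |h g| ≤ ((2 : ℝ) ^ k * D + C) / 2 ^ k := by
      rw [le_div_iff₀ h2k]
      nlinarith
    have e : ((2 : ℝ) ^ k * D + C) / 2 ^ k = D + C / 2 ^ k := by
      field_simp
    linarith [this, e.le, e.ge]
  have htend : Tendsto (fun k : ℕ => D + C / 2 ^ k) atTop (𝓝 (D + 0)) := by
    refine Tendsto.const_add D ?_
    have : Tendsto (fun k : ℕ => C * (1 / 2 : ℝ) ^ k) atTop (𝓝 (C * 0)) :=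
      (tendsto_pow_atTop_nhds_zero_of_lt_one (by norm_num) (by norm_num)).const_mul C
    have e : (fun k : ℕ => C / 2 ^ k) = fun k : ℕ => C * (1 / 2 : ℝ) ^ k := by
      funext k
      rw [div_pow, one_pow]
      ring
    rw [e]
    simpa using this
  have := ge_of_tendsto' htend hbd
  simpa using this

lemma defectNorm_add_le {u v : Γ → ℝ} {Cu Cv : ℝ} (hu : ∀ g, |u g| ≤ Cu)
    (hv : ∀ g, |v g| ≤ Cv) :
    defectNorm (u + v) ≤ defectNorm u + defectNorm v := by
  refine Real.iSup_le (fun p => ?_) (add_nonneg (defectNorm_nonneg hu) (defectNorm_nonneg hv))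
  have h1 := abs_defect_le hu p.1 p.2
  have h2 := abs_defect_le hv p.1 p.2
  have key : |(u + v) (p.1 * p.2) - (u + v) p.1 - (u + v) p.2|
      = |(u (p.1 * p.2) - u p.1 - u p.2) + (v (p.1 * p.2) - v p.1 - v p.2)| := by
    simp only [Pi.add_apply]
    ring_nf
  rw [key]
  exact (abs_add_le _ _).trans (add_le_add h1 h2)

lemma defectNorm_neg (h : Γ → ℝ) : defectNorm (-h) = defectNorm h := by
  unfold defectNorm
  congr 1
  funext p
  simp only [Pi.neg_apply]
  rw [show -h (p.1 * p.2) - -h p.1 - -h p.2 = -(h (p.1 * p.2) - h p.1 - h p.2) by ring, abs_neg]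

/-- From an infinite set of elements of order ≠ 2, extract an injective sequence avoiding
inverses. -/
lemma exists_indep_seq (hinf : {g : Γ | g * g ≠ 1}.Infinite) :
    ∃ s : ℕ → Γ, Function.Injective s ∧ ∀ m n, s m ≠ (s n)⁻¹ := by
  classical
  have key : ∀ t : Finset Γ, ∃ g : Γ, g * g ≠ 1 ∧ g ∉ t := by
    intro t
    obtain ⟨g, hg⟩ := (hinf.diff t.finite_toSet).nonempty
    exact ⟨g, hg.1, hg.2⟩
  choose next hnextA hnextT using key
  let p : ℕ → Finset Γ := fun n => Nat.rec ∅ (fun _ t => insert (next t) (insert (next t)⁻¹ t)) n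
  let s : ℕ → Γ := fun n => next (p n)
  have hp : ∀ n, p (n + 1) = insert (s n) (insert (s n)⁻¹ (p n)) := fun n => rfl
  have hmono : ∀ m n, m ≤ n → p m ⊆ p n := by
    intro m n h
    induction h with
    | refl => exact subset_rfl
    | step h ih =>
      refine ih.trans ?_
      intro x hx
      rw [hp]
      exact Finset.mem_insert_of_mem (Finset.mem_insert_of_mem hx)
  have hmem : ∀ n, s n ∈ p (n + 1) ∧ (s n)⁻¹ ∈ p (n + 1) := by
    intro n
    rw [hp]
    exact ⟨Finset.mem_insert_self _ _, Finset.mem_insert_of_mem (Finset.mem_insert_self _ _)⟩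
  have hnot : ∀ n, s n ∉ p n := fun n => hnextT (p n)
  have hlt : ∀ m n, m < n → s n ≠ s m ∧ s n ≠ (s m)⁻¹ := by
    intro m n h
    have h1 : s m ∈ p n := hmono (m + 1) n h (hmem m).1
    have h2 : (s m)⁻¹ ∈ p n := hmono (m + 1) n h (hmem m).2
    exact ⟨fun e => hnot n (e ▸ h1), fun e => hnot n (e ▸ h2)⟩
  refine ⟨s, ?_, ?_⟩
  · intro a b hab
    by_contra hne
    rcases lt_or_gt_of_ne hne with hl | hl
    · exact (hlt a b hl).1 hab.symm
    · exact (hlt b a hl).1 hab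
  · intro m n
    rcases lt_trichotomy m n with hl | he | hl
    · intro e
      have : s n = (s m)⁻¹ := by rw [e, inv_inv]
      exact (hlt m n hl).2 this
    · subst he
      intro e
      exact hnextA (p m) (mul_eq_one_iff_eq_inv.mpr e)
    · exact (hlt n m hl).2

end Aux

/-- **Non-separability and completeness of the defect space.** If `Γ` has infinitely
many elements of order different from 2 (i.e. infinitely many `g` with `g * g ≠ 1`),
then the space `D(Γ)` of bounded alternating functions with the defect norm is a
Banach space (complete) which is not separable. -/
theorem defectSpace_complete_not_separable (Γ : Type*) [Group Γ]
    (hinf : {g : Γ | g * g ≠ 1}.Infinite) :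
    -- completeness: every Cauchy sequence (w.r.t. the defect norm) converges in `D(Γ)`
    (∀ F : ℕ → Γ → ℝ, (∀ n, F n ∈ defectSpace Γ) →
      (∀ ε : ℝ, 0 < ε → ∃ N : ℕ, ∀ m n : ℕ, N ≤ m → N ≤ n →
        defectNorm (F m - F n) < ε) →
      ∃ f ∈ defectSpace Γ, ∀ ε : ℝ, 0 < ε → ∃ N : ℕ, ∀ n : ℕ, N ≤ n →
        defectNorm (F n - f) < ε) ∧
    -- non-separability: no countable subset of `D(Γ)` is dense w.r.t. the defect norm
    ¬ ∃ T : Set (Γ → ℝ), T ⊆ defectSpace Γ ∧ T.Countable ∧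
        ∀ f ∈ defectSpace Γ, ∀ ε : ℝ, 0 < ε → ∃ t ∈ T, defectNorm (f - t) < ε := by
  classical
  constructor
  · -- Completeness
    intro F hF hCauchy
    choose C hCb using fun n => (hF n).1
    have hsub : ∀ m n : ℕ, ∀ g : Γ, |(F m - F n) g| ≤ C m + C n := by
      intro m n g
      simp only [Pi.sub_apply]
      exact (abs_sub _ _).trans (add_le_add (hCb m g) (hCb n g))
    have hpt : ∀ m n : ℕ, ∀ g : Γ, |F m g - F n g| ≤ defectNorm (F m - F n) := by
      intro m n g
      have := abs_le_defectNorm (hsub m n) g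
      simpa [Pi.sub_apply] using this
    -- pointwise Cauchy
    have hc : ∀ g : Γ, CauchySeq (fun n => F n g) := by
      intro g
      rw [Metric.cauchySeq_iff]
      intro ε hε
      obtain ⟨N, hN⟩ := hCauchy ε hε
      refine ⟨N, fun m hm n hn => ?_⟩
      rw [Real.dist_eq]
      exact lt_of_le_of_lt (hpt m n g) (hN m n hm hn)
    choose f hf using fun g => cauchySeq_tendsto_of_complete (hc g)
    -- the pointwise bound in the limit
    have hlim : ∀ N : ℕ, ∀ δ : ℝ, (∀ m n : ℕ, N ≤ m → N ≤ n → defectNorm (F m - F n) < δ) →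
        ∀ n : ℕ, N ≤ n → ∀ g : Γ, |F n g - f g| ≤ δ := by
      intro N δ hN n hn g
      have ht : Tendsto (fun m => |F n g - F m g|) atTop (𝓝 |F n g - f g|) :=
        ((hf g).const_sub (F n g)).abs
      refine le_of_tendsto ht ?_
      filter_upwards [eventually_ge_atTop N] with m hm
      exact (hpt n m g).trans (hN n m hn hm).le
    have hmem : f ∈ defectSpace Γ := by
      constructor
      · obtain ⟨N, hN⟩ := hCauchy 1 one_pos
        refine ⟨C N + 1, fun g => ?_⟩
        have h1 : |F N g - f g| ≤ 1 := hlim N 1 hN N le_rfl g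
        have h2 : |f g| - |F N g| ≤ |f g - F N g| := abs_sub_abs_le_abs_sub _ _
        have h3 : |f g - F N g| = |F N g - f g| := abs_sub_comm _ _
        have h4 := hCb N g
        linarith
      · intro g
        have h1 : Tendsto (fun n => F n g⁻¹) atTop (𝓝 (f g⁻¹)) := hf g⁻¹
        have h2 : Tendsto (fun n => F n g⁻¹) atTop (𝓝 (-f g)) := by
          have := (hf g).neg
          refine this.congr fun n => ?_
          exact ((hF n).2 g).symm
        exact tendsto_nhds_unique h1 h2
    refine ⟨f, hmem, ?_⟩
    intro ε hε
    obtain ⟨N, hN⟩ := hCauchy (ε / 6) (by linarith)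
    refine ⟨N, fun n hn => ?_⟩
    have hb : ∀ g : Γ, |(F n - f) g| ≤ ε / 6 := by
      intro g
      simp only [Pi.sub_apply]
      exact hlim N (ε / 6) hN n hn g
    have := defectNorm_le hb
    linarith
  · -- Non-separability
    rintro ⟨T, hTsub, hTcount, hdense⟩
    obtain ⟨s, hs_inj, hs_inv⟩ := exists_indep_seq hinf
    set Fc : Set ℕ → Γ → ℝ := fun S x =>
      (if ∃ n ∈ S, x = s n then (1 : ℝ) else 0) - (if ∃ n ∈ S, x = (s n)⁻¹ then (1 : ℝ) else 0)
      with hFc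
    have hbound : ∀ S x, |Fc S x| ≤ 1 := by
      intro S x
      simp only [hFc]
      split_ifs <;> norm_num
    have halt : ∀ S x, Fc S x⁻¹ = -Fc S x := by
      intro S x
      simp only [hFc]
      have c1 : (∃ n ∈ S, x⁻¹ = s n) ↔ (∃ n ∈ S, x = (s n)⁻¹) := by
        constructor
        · rintro ⟨n, hn, e⟩; exact ⟨n, hn, by rw [← e, inv_inv]⟩
        · rintro ⟨n, hn, e⟩; exact ⟨n, hn, by rw [e, inv_inv]⟩
      have c2 : (∃ n ∈ S, x⁻¹ = (s n)⁻¹) ↔ (∃ n ∈ S, x = s n) := by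
        constructor
        · rintro ⟨n, hn, e⟩; exact ⟨n, hn, by rw [← inv_inv x, e, inv_inv]⟩
        · rintro ⟨n, hn, e⟩; exact ⟨n, hn, by rw [e]⟩
      simp only [c1, c2]
      ring
    have hmemF : ∀ S, Fc S ∈ defectSpace Γ := fun S => ⟨⟨1, hbound S⟩, halt S⟩
    -- value at s n
    have hval : ∀ (S S' : Set ℕ) (n : ℕ), n ∈ S → n ∉ S' → (Fc S - Fc S') (s n) = 1 := by
      intro S S' n hn hn'
      have c1 : ∃ m ∈ S, s n = s m := ⟨n, hn, rfl⟩
      have c2 : ∀ S'' : Set ℕ, ¬ ∃ m ∈ S'', s n = (s m)⁻¹ := by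
        rintro S'' ⟨m, _, e⟩
        exact hs_inv n m e
      have c3 : ¬ ∃ m ∈ S', s n = s m := by
        rintro ⟨m, hm, e⟩
        exact hn' (hs_inj e ▸ hm)
      simp only [Pi.sub_apply, hFc]
      rw [if_pos c1, if_neg (c2 S), if_neg c3, if_neg (c2 S')]
      ring
    have hsub2 : ∀ S S' : Set ℕ, ∀ x, |(Fc S - Fc S') x| ≤ 2 := by
      intro S S' x
      simp only [Pi.sub_apply]
      have := (abs_sub (Fc S x) (Fc S' x)).trans (add_le_add (hbound S x) (hbound S' x))
      linarith
    have hsep : ∀ S S' : Set ℕ, S ≠ S' → 1 ≤ defectNorm (Fc S - Fc S') := by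
      intro S S' hne
      have : (∃ n, n ∈ S ∧ n ∉ S') ∨ (∃ n, n ∈ S' ∧ n ∉ S) := by
        by_contra hcon
        push_neg at hcon
        exact hne (Set.Subset.antisymm (fun n hn => hcon.1 n hn) (fun n hn => hcon.2 n hn))
      rcases this with ⟨n, hn, hn'⟩ | ⟨n, hn, hn'⟩
      · have h1 := abs_le_defectNorm (hsub2 S S') (s n)
        rw [hval S S' n hn hn'] at h1
        simpa using h1
      · have h1 := abs_le_defectNorm (hsub2 S' S) (s n)
        rw [hval S' S n hn hn'] at h1
        have e : defectNorm (Fc S' - Fc S) = defectNorm (Fc S - Fc S') := by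
          rw [← neg_sub (Fc S) (Fc S'), defectNorm_neg]
        rw [e] at h1
        simpa using h1
    -- choose approximants
    have hchoice : ∀ S : Set ℕ, ∃ t ∈ T, defectNorm (Fc S - t) < 1 / 2 :=
      fun S => hdense (Fc S) (hmemF S) (1 / 2) (by norm_num)
    choose φ hφT hφd using hchoice
    have hφinj : Function.Injective φ := by
      intro S S' he
      by_contra hne
      obtain ⟨⟨Ct, hCt⟩, _⟩ := hTsub (hφT S)
      have hb1 : ∀ x, |(Fc S - φ S) x| ≤ 1 + Ct := by
        intro x
        simp only [Pi.sub_apply]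
        exact (abs_sub _ _).trans (add_le_add (hbound S x) (hCt x))
      have hb2 : ∀ x, |(φ S - Fc S') x| ≤ Ct + 1 := by
        intro x
        simp only [Pi.sub_apply]
        exact (abs_sub _ _).trans (add_le_add (hCt x) (hbound S' x))
      have hsum : defectNorm (Fc S - Fc S')
          ≤ defectNorm (Fc S - φ S) + defectNorm (φ S - Fc S') := by
        have e : Fc S - Fc S' = (Fc S - φ S) + (φ S - Fc S') := by
          funext x
          simp only [Pi.sub_apply, Pi.add_apply]
          ring
        rw [e]
        exact defectNorm_add_le hb1 hb2
      have h2 : defectNorm (φ S - Fc S') = defectNorm (Fc S' - φ S') := by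
        rw [he, ← neg_sub (Fc S') (φ S'), defectNorm_neg]
      have := hsep S S' hne
      have d1 := hφd S
      have d2 := hφd S'
      rw [h2] at hsum
      linarith
    obtain ⟨e, he⟩ := Set.countable_iff_exists_injective.mp hTcount
    have : Function.Injective (fun S : Set ℕ => e ⟨φ S, hφT S⟩) := by
      intro S S' h
      exact hφinj (congrArg Subtype.val (he h))
    exact Function.cantor_injective _ this
end

section
/- On the space of bounded alternating real functions on a group Γ, the defect norm ‖f‖ = sup_{g,h} |f(gh) − f(g) − f(h)| is equivalent to the supremum norm ‖f‖_∞; in particular there are constants such that ‖f‖_∞ ≤ ‖f‖ ≤ 3‖f‖_∞ (equivalence of norms). -/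
/-- The supremum norm of a real-valued function. -/
noncomputable def supNorm {G : Type*} (f : G → ℝ) : ℝ :=
  ⨆ g : G, |f g|

/-- **Equivalence of the defect norm and the sup norm** on bounded alternating
functions: `‖f‖_∞ ≤ ‖f‖ ≤ 3‖f‖_∞`. -/
theorem defectNorm_equiv_supNorm {Γ : Type*} [Group Γ] (f : Γ → ℝ)
    (hbdd : ∃ C : ℝ, ∀ g : Γ, |f g| ≤ C)
    (halt : ∀ g : Γ, f g⁻¹ = -f g) :
    supNorm f ≤ defectNorm f ∧ defectNorm f ≤ 3 * supNorm f := by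
  haveI : Nonempty Γ := ⟨1⟩
  obtain ⟨C, hC⟩ := hbdd
  have htri : ∀ g h : Γ, |f (g * h) - f g - f h| ≤ |f (g * h)| + |f g| + |f h| := by
    intro g h
    calc |f (g * h) - f g - f h| = |f (g * h) + -f g + -f h| := by ring_nf
      _ ≤ |f (g * h) + -f g| + |-f h| := abs_add_le _ _
      _ ≤ (|f (g * h)| + |-f g|) + |-f h| := add_le_add_left (abs_add_le _ _) _
      _ = |f (g * h)| + |f g| + |f h| := by rw [abs_neg, abs_neg]
  have hbddS : BddAbove (Set.range fun g : Γ => |f g|) :=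
    ⟨C, by rintro x ⟨g, rfl⟩; exact hC g⟩
  have hbddD : BddAbove (Set.range fun p : Γ × Γ => |f (p.1 * p.2) - f p.1 - f p.2|) := by
    refine ⟨3 * C, ?_⟩
    rintro x ⟨⟨g, h⟩, rfl⟩
    have := htri g h
    have h1 := hC (g * h); have h2 := hC g; have h3 := hC h
    simp only at this ⊢
    linarith
  have hD : ∀ g h : Γ, |f (g * h) - f g - f h| ≤ defectNorm f := fun g h =>
    le_ciSup hbddD (g, h)
  have hD0 : 0 ≤ defectNorm f := le_trans (abs_nonneg _) (hD 1 1)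
  -- power estimate
  have hpow : ∀ (n : ℕ) (g : Γ), |f (g ^ (n + 1)) - (n + 1 : ℕ) * f g| ≤ n * defectNorm f := by
    intro n
    induction n with
    | zero => intro g; simp
    | succ n ih =>
      intro g
      have h1 := hD (g ^ (n + 1)) g
      rw [← pow_succ g (n + 1)] at h1
      have h2 := ih g
      calc |f (g ^ (n + 1 + 1)) - (n + 1 + 1 : ℕ) * f g|
          = |(f (g ^ (n + 1 + 1)) - f (g ^ (n + 1)) - f g)
              + (f (g ^ (n + 1)) - (n + 1 : ℕ) * f g)| := by push_cast; ring_nf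
        _ ≤ |f (g ^ (n + 1 + 1)) - f (g ^ (n + 1)) - f g|
              + |f (g ^ (n + 1)) - (n + 1 : ℕ) * f g| := abs_add_le _ _
        _ ≤ defectNorm f + n * defectNorm f := add_le_add h1 h2
        _ = (n + 1 : ℕ) * defectNorm f := by push_cast; ring
  have key : ∀ g : Γ, |f g| ≤ defectNorm f := by
    intro g
    by_contra hlt
    push_neg at hlt
    set ε := |f g| - defectNorm f with hε
    have hεpos : 0 < ε := by simp [hε]; linarith
    have hbound : ∀ n : ℕ, (n + 1 : ℝ) * ε ≤ C := by
      intro n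
      have h1 := hpow n g
      have h2 : |((n : ℝ) + 1) * f g| - |f (g ^ (n + 1))| ≤ |((n : ℝ) + 1) * f g - f (g ^ (n + 1))| :=
        abs_sub_abs_le_abs_sub _ _
      rw [abs_sub_comm] at h2
      push_cast at h1
      have h3 : |((n : ℝ) + 1) * f g| = ((n : ℝ) + 1) * |f g| := by
        rw [abs_mul, abs_of_nonneg (by positivity : (0:ℝ) ≤ (n : ℝ) + 1)]
      have h4 := hC (g ^ (n + 1))
      have h5 : (n : ℝ) * defectNorm f ≤ ((n : ℝ) + 1) * defectNorm f := by nlinarith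
      nlinarith
    obtain ⟨n, hn⟩ := Archimedean.arch C hεpos
    have h6 : ((n : ℝ) + 1) * ε ≤ C := hbound n
    have h7 : C ≤ (n : ℝ) * ε := by simpa [nsmul_eq_mul] using hn
    nlinarith
  constructor
  · exact ciSup_le key
  · refine ciSup_le ?_
    rintro ⟨g, h⟩
    have hS : ∀ x : Γ, |f x| ≤ supNorm f := fun x => le_ciSup hbddS x
    have := htri g h
    have h1 := hS (g * h); have h2 := hS g; have h3 := hS h
    simp only at this ⊢
    linarith
end

section
/- Let Γ be a free group of finite rank n ≥ 2 and H ≤ Γ a subgroup of finite rank and infinite index. Then there exists a basis {x₁,…,xₙ} of Γ such that for every g ∈ Γ and every i, gHg⁻¹ ∩ ⟨xᵢ⟩ = {1}; i.e., no conjugate of H contains a nontrivial power of any basis element. -/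
set_option linter.unusedSectionVars false

open List

namespace GoodBasis

variable {α : Type*} [DecidableEq α]

/-- inverse of a letter -/
def invL (x : α × Bool) : α × Bool := (x.1, !x.2)

/-- `Cancels x y` : the two-letter word `[x, y]` reduces to nothing. -/
def Cancels (x y : α × Bool) : Prop := x.1 = y.1 ∧ x.2 = !y.2

instance : DecidablePred (fun p : (α × Bool) × (α × Bool) => Cancels p.1 p.2) := by
  intro p; unfold Cancels; infer_instance

lemma cancels_iff_eq_invL {x y : α × Bool} : Cancels x y ↔ y = invL x := by
  cases x with | mk a b => cases y with | mk a' b' =>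
  simp only [Cancels, invL]
  constructor
  · rintro ⟨h1, h2⟩; subst h1; simp at h2 ⊢; cases b' <;> simp_all
  · rintro h; simp at h; obtain ⟨h1, h2⟩ := h; subst h1; subst h2; simp

lemma cancels_invL_right {x y : α × Bool} : Cancels x (invL y) ↔ x = y := by
  cases x with | mk a b => cases y with | mk a' b' =>
  simp only [Cancels, invL]
  constructor
  · rintro ⟨h1, h2⟩; subst h1; cases b' <;> simp_all
  · rintro h; simp at h; obtain ⟨h1, h2⟩ := h; subst h1; subst h2; simp

lemma invL_invL (x : α × Bool) : invL (invL x) = x := by cases x; simp [invL]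

/-- Reduced words, as chains without cancellation. -/
def Rw (w : List (α × Bool)) : Prop := List.Chain' (fun a b => ¬ Cancels a b) w

lemma Rw.nil : Rw ([] : List (α × Bool)) := List.isChain_nil

lemma Rw.singleton (x : α × Bool) : Rw [x] := List.isChain_singleton x

/-- A positive word: all letters have sign `true`. -/
def Pw (w : List (α × Bool)) : Prop := ∀ x ∈ w, x.2 = true

lemma Pw.not_cancels {x y : α × Bool} (hx : x.2 = true) (hy : y.2 = true) :
    ¬ Cancels x y := by
  rintro ⟨h1, h2⟩; rw [hx, hy] at h2; simp at h2

lemma Pw.rw {w : List (α × Bool)} (h : Pw w) : Rw w := by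
  induction w with
  | nil => exact Rw.nil
  | cons x t ih =>
    rcases t with _ | ⟨y, t'⟩
    · exact Rw.singleton x
    · refine List.isChain_cons_cons.2 ⟨?_, ih ?_⟩
      · exact Pw.not_cancels (h x (by simp)) (h y (by simp))
      · intro z hz; exact h z (by simp [hz])

/-- On a reduced word, `FreeGroup.reduce` is the identity. -/
lemma reduce_eq_self {w : List (α × Bool)} (h : Rw w) : FreeGroup.reduce w = w := by
  induction w with
  | nil => rfl
  | cons x t ih =>
    have ht : Rw t := (List.isChain_cons.1 h).2
    rw [FreeGroup.reduce.cons, ih ht]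
    rcases t with _ | ⟨y, t'⟩
    · rfl
    · have hxy : ¬ Cancels x y := (List.isChain_cons_cons.1 h).1
      simp only [Cancels] at hxy
      simp [hxy]

lemma toWord_mk_eq {w : List (α × Bool)} (h : Rw w) : (FreeGroup.mk w).toWord = w := by
  rw [FreeGroup.toWord_mk, reduce_eq_self h]


/-- word power -/
def pw (w : List (α × Bool)) (k : ℕ) : List (α × Bool) := (List.replicate k w).flatten

lemma pw_zero (w : List (α × Bool)) : pw w 0 = [] := rfl

lemma pw_succ (w : List (α × Bool)) (k : ℕ) : pw w (k+1) = w ++ pw w k := by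
  simp [pw, List.replicate_succ]

lemma pw_add (w : List (α × Bool)) (a b : ℕ) : pw w (a+b) = pw w a ++ pw w b := by
  simp only [pw, List.replicate_add, List.flatten_append]

lemma pw_one (w : List (α × Bool)) : pw w 1 = w := by simp [pw]

lemma pw_succ' (w : List (α × Bool)) (k : ℕ) : pw w (k+1) = pw w k ++ w := by
  rw [pw_add, pw_one]

lemma mk_pw (w : List (α × Bool)) (k : ℕ) : FreeGroup.mk (pw w k) = (FreeGroup.mk w) ^ k := by
  rw [FreeGroup.pow_mk]; rfl

lemma pw_mem {w : List (α × Bool)} {k : ℕ} {x : α × Bool} (h : x ∈ pw w k) : x ∈ w := by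
  simp only [pw, List.mem_flatten] at h
  obtain ⟨l, hl, hx⟩ := h
  rw [List.eq_of_mem_replicate hl] at hx; exact hx

lemma pw_ne_nil {w : List (α × Bool)} (hw : w ≠ []) {k : ℕ} (hk : 1 ≤ k) : pw w k ≠ [] := by
  obtain ⟨k', rfl⟩ : ∃ k', k = k' + 1 := ⟨k - 1, by omega⟩
  rw [pw_succ]; simp [hw]

lemma pw_head? {w : List (α × Bool)} (hw : w ≠ []) {k : ℕ} (hk : 1 ≤ k) :
    (pw w k).head? = w.head? := by
  obtain ⟨k', rfl⟩ : ∃ k', k = k' + 1 := ⟨k - 1, by omega⟩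
  rw [pw_succ, List.head?_append_of_ne_nil _ hw]

lemma pw_getLast? {w : List (α × Bool)} (hw : w ≠ []) {k : ℕ} (hk : 1 ≤ k) :
    (pw w k).getLast? = w.getLast? := by
  obtain ⟨k', rfl⟩ : ∃ k', k = k' + 1 := ⟨k - 1, by omega⟩
  rw [pw_succ', List.getLast?_append_of_ne_nil _ hw]

/-- invRev facts -/
lemma invRev_eq (w : List (α × Bool)) : FreeGroup.invRev w = (w.map invL).reverse := by
  simp [FreeGroup.invRev, invL]

lemma invRev_nil : FreeGroup.invRev ([] : List (α × Bool)) = [] := rfl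

lemma invRev_cons (x : α × Bool) (w : List (α × Bool)) :
    FreeGroup.invRev (x :: w) = FreeGroup.invRev w ++ [invL x] := by
  simp [invRev_eq]

lemma invRev_singleton (x : α × Bool) : FreeGroup.invRev [x] = [invL x] := by
  simp [invRev_eq]

lemma invRev_head? (w : List (α × Bool)) :
    (FreeGroup.invRev w).head? = w.getLast?.map invL := by
  rw [invRev_eq, List.head?_reverse, List.getLast?_map]

lemma invRev_eq_nil_iff {w : List (α × Bool)} : FreeGroup.invRev w = [] ↔ w = [] := by
  rw [invRev_eq]; simp


lemma cancels_invL_invL {x y : α × Bool} : Cancels (invL x) (invL y) ↔ Cancels y x := by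
  cases x with | mk a b => cases y with | mk a' b' =>
  simp only [Cancels, invL]
  constructor
  · rintro ⟨h1, h2⟩; subst h1; cases b <;> cases b' <;> simp_all
  · rintro ⟨h1, h2⟩; subst h1; cases b <;> cases b' <;> simp_all

lemma Rw.invRev {w : List (α × Bool)} (h : Rw w) : Rw (FreeGroup.invRev w) := by
  have : FreeGroup.invRev w = (w.map invL).reverse := by simp [FreeGroup.invRev, invL]
  rw [this, Rw, List.Chain', List.isChain_reverse, List.isChain_map]
  unfold Rw at h
  refine List.IsChain.imp ?_ h
  intro a b hab
  rw [cancels_invL_invL]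
  intro hc
  exact hab hc

/-- junction non-cancellation between the end of `a` and the start of `b` -/
def Jn (a b : List (α × Bool)) : Prop :=
  ∀ x ∈ a.getLast?, ∀ y ∈ b.head?, ¬ Cancels x y

lemma Jn.nil_left (b : List (α × Bool)) : Jn [] b := by
  intro x hx; simp at hx

lemma Jn.nil_right (a : List (α × Bool)) : Jn a [] := by
  intro x hx y hy; simp at hy

lemma chain'_append_of_jn {a b : List (α × Bool)} (ha : Rw a) (hb : Rw b) (hj : Jn a b) :
    Rw (a ++ b) := by
  rw [Rw, List.Chain', List.isChain_append]
  exact ⟨ha, hb, hj⟩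

lemma rw_pw {ρ : List (α × Bool)} (hρ : Pw ρ) (k : ℕ) : Rw (pw ρ k) := by
  have : Pw (pw ρ k) := fun x hx => hρ x (pw_mem hx)
  exact this.rw


end GoodBasis
-- continuation of dev.lean (will be appended)
namespace GoodBasis
variable {α : Type*} [DecidableEq α]

lemma rw_concat {p ρ : List (α × Bool)} {k : ℕ} (hk : 1 ≤ k) (hp : Rw p) (hρ : Pw ρ)
    (hne : ρ ≠ []) (j1 : Jn p ρ) (j2 : Jn ρ (FreeGroup.invRev p)) :
    Rw (p ++ pw ρ k ++ FreeGroup.invRev p) := by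
  rw [List.append_assoc]
  apply chain'_append_of_jn hp
  · apply chain'_append_of_jn (rw_pw hρ k) hp.invRev
    intro x hx y hy
    rw [pw_getLast? hne hk] at hx
    exact j2 x hx y hy
  · intro x hx y hy
    rw [List.head?_append_of_ne_nil _ (pw_ne_nil hne hk), pw_head? hne hk] at hy
    exact j1 x hx y hy

/-- rotation of a word -/
def IsRot (ρ c : List (α × Bool)) : Prop := ∃ u v, c = u ++ v ∧ ρ = v ++ u

lemma IsRot.refl (c : List (α × Bool)) : IsRot c c := ⟨c, [], by simp, by simp⟩

lemma IsRot.mem {ρ c : List (α × Bool)} (h : IsRot ρ c) {x} (hx : x ∈ ρ) : x ∈ c := by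
  obtain ⟨u, v, rfl, rfl⟩ := h
  simp only [List.mem_append] at hx ⊢; tauto

lemma IsRot.pos {ρ c : List (α × Bool)} (h : IsRot ρ c) (hc : Pw c) : Pw ρ :=
  fun x hx => hc x (h.mem hx)

lemma IsRot.ne_nil {ρ c : List (α × Bool)} (h : IsRot ρ c) (hc : c ≠ []) : ρ ≠ [] := by
  obtain ⟨u, v, rfl, rfl⟩ := h
  intro hvu
  rcases List.append_eq_nil_iff.1 hvu with ⟨rfl, rfl⟩
  simp at hc

lemma IsRot.rotl {r : α × Bool} {t c : List (α × Bool)} (h : IsRot (r :: t) c) :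
    IsRot (t ++ [r]) c := by
  obtain ⟨u, v, hc, hρ⟩ := h
  rcases v with _ | ⟨z, v'⟩
  · simp only [List.nil_append] at hρ
    refine ⟨[r], t, ?_, by simp⟩
    rw [hc, ← hρ]; simp
  · simp only [List.cons_append, List.cons.injEq] at hρ
    obtain ⟨rfl, ht⟩ := hρ
    refine ⟨u ++ [r], v', ?_, ?_⟩
    · rw [hc]; simp
    · rw [ht]; simp

lemma IsRot.rotr {r : α × Bool} {t c : List (α × Bool)} (h : IsRot (t ++ [r]) c) :
    IsRot (r :: t) c := by
  obtain ⟨u, v, hc, hρ⟩ := h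
  rcases List.eq_nil_or_concat u with rfl | ⟨u', e, rfl⟩
  · simp only [List.append_nil] at hρ
    refine ⟨t, [r], ?_, by simp⟩
    rw [hc, ← hρ]; simp
  · have hρ' : (v ++ u') ++ [e] = t ++ [r] := by
      rw [List.append_assoc, ← List.concat_eq_append (as := u') (a := e)]; exact hρ.symm
    obtain ⟨h1, h2⟩ := List.append_inj' hρ' (by simp)
    have he : e = r := by simpa using h2
    subst he
    refine ⟨u', [e] ++ v, ?_, ?_⟩
    · rw [hc]; simp [List.concat_eq_append]
    · rw [← h1]; simp

lemma conj_pow' {G : Type*} [Group G] (g a : G) (k : ℕ) :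
    (g * a * g⁻¹) ^ k = g * a ^ k * g⁻¹ := by
  induction k with
  | zero => simp
  | succ n ih => rw [pow_succ, pow_succ, ih]; group

lemma mk_cons (x : α × Bool) (l : List (α × Bool)) :
    FreeGroup.mk (x :: l) = FreeGroup.mk [x] * FreeGroup.mk l := by
  rw [FreeGroup.mul_mk]; rfl

lemma inv_mk_single (x : α × Bool) : (FreeGroup.mk [x])⁻¹ = FreeGroup.mk [invL x] := by
  rw [FreeGroup.inv_mk, invRev_singleton]

lemma mk_single_mul_invL (x : α × Bool) :
    FreeGroup.mk [x] * FreeGroup.mk [invL x] = 1 := by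
  rw [← inv_mk_single, mul_inv_cancel]

lemma getLast?_cons_ne {y : α × Bool} {p : List (α × Bool)} (h : p ≠ []) :
    (y :: p).getLast? = p.getLast? := by
  rcases p with _ | ⟨z, t⟩
  · simp at h
  · exact List.getLast?_cons_cons ..

theorem conj_structure (c : List (α × Bool)) (hcne : c ≠ []) (l : List (α × Bool)) :
    ∃ p ρ, IsRot ρ c ∧ Rw p ∧ Jn p ρ ∧ Jn ρ (FreeGroup.invRev p) ∧
      ∀ k : ℕ, FreeGroup.mk l * (FreeGroup.mk c) ^ k * (FreeGroup.mk l)⁻¹ =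
        FreeGroup.mk (p ++ pw ρ k ++ FreeGroup.invRev p) := by
  induction l with
  | nil =>
    refine ⟨[], c, IsRot.refl c, Rw.nil, Jn.nil_left _, by rw [invRev_nil]; exact Jn.nil_right _,
      fun k => ?_⟩
    have h1 : FreeGroup.mk ([] : List (α × Bool)) = 1 := (FreeGroup.one_eq_mk).symm
    simp only [List.nil_append, invRev_nil, List.append_nil, h1, one_mul, inv_one, mul_one]
    rw [mk_pw]
  | cons x l' ih =>
    obtain ⟨p, ρ, hrot, hp, j1, j2, heq⟩ := ih
    have hρne : ρ ≠ [] := hrot.ne_nil hcne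
    have key : ∀ k : ℕ, FreeGroup.mk (x :: l') * (FreeGroup.mk c) ^ k * (FreeGroup.mk (x :: l'))⁻¹
        = FreeGroup.mk [x] * FreeGroup.mk (p ++ pw ρ k ++ FreeGroup.invRev p) * FreeGroup.mk [invL x] := by
      intro k
      rw [← heq k, mk_cons, ← inv_mk_single, mul_inv_rev]
      group
    rcases p with _ | ⟨y, p'⟩
    · -- p = []
      rcases ρ with _ | ⟨r, t⟩
      · exact absurd rfl hρne
      by_cases hxr : Cancels x r
      · -- head cancellation: rotate
        have hr : r = invL x := cancels_iff_eq_invL.1 hxr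
        have hstep : FreeGroup.mk [x] * FreeGroup.mk (r :: t) * FreeGroup.mk [invL x]
            = FreeGroup.mk (t ++ [r]) := by
          rw [mk_cons r t, ← mul_assoc, hr, mk_single_mul_invL, one_mul,
            FreeGroup.mul_mk]
        refine ⟨[], t ++ [r], hrot.rotl, Rw.nil, Jn.nil_left _,
          by rw [invRev_nil]; exact Jn.nil_right _, fun k => ?_⟩
        rw [key k]
        simp only [List.nil_append, invRev_nil, List.append_nil]
        rw [mk_pw, mk_pw, ← hstep]
        rw [show FreeGroup.mk [invL x] = (FreeGroup.mk [x])⁻¹ from (inv_mk_single x).symm]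
        rw [conj_pow']
      · by_cases hxE : x = (r :: t).getLast (by simp)
        · -- tail cancellation: rotate the other way
          subst hxE
          have hsplit : (r :: t).dropLast ++ [(r :: t).getLast (by simp)] = r :: t :=
            List.dropLast_append_getLast (by simp)
          set E := (r :: t).getLast (by simp) with hE
          set D := (r :: t).dropLast with hD
          have hstep : FreeGroup.mk [E] * FreeGroup.mk (r :: t) * FreeGroup.mk [invL E]
              = FreeGroup.mk (E :: D) := by
            conv_lhs => rw [← hsplit]
            rw [show FreeGroup.mk (D ++ [E]) = FreeGroup.mk D * FreeGroup.mk [E] from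
              (FreeGroup.mul_mk).symm, mk_cons E D]
            rw [mul_assoc, mul_assoc, mk_single_mul_invL, mul_one]
          have hrot' : IsRot (E :: D) c := by
            apply IsRot.rotr
            rw [hsplit]
            exact hrot
          refine ⟨[], E :: D, hrot', Rw.nil, Jn.nil_left _,
            by rw [invRev_nil]; exact Jn.nil_right _, fun k => ?_⟩
          rw [key k]
          simp only [List.nil_append, invRev_nil, List.append_nil]
          rw [mk_pw, mk_pw, ← hstep]
          rw [show FreeGroup.mk [invL E] = (FreeGroup.mk [E])⁻¹ from (inv_mk_single E).symm]
          rw [conj_pow']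
        · -- no cancellation, p' := [x]
          refine ⟨[x], r :: t, hrot, Rw.singleton x, ?_, ?_, fun k => ?_⟩
          · intro a ha b hb
            simp only [List.getLast?_singleton, Option.mem_some_iff] at ha
            simp only [List.head?_cons, Option.mem_some_iff] at hb
            rw [← ha, ← hb]
            exact hxr
          · intro a ha b hb
            rw [invRev_singleton] at hb
            simp only [List.head?_cons, Option.mem_some_iff] at hb
            rw [List.getLast?_eq_getLast (l := r :: t) (by simp)] at ha
            simp only [Option.mem_some_iff] at ha
            rw [← ha, ← hb]
            rw [cancels_invL_right]
            intro hEq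
            exact hxE hEq.symm
          · rw [key k, invRev_singleton]
            rw [FreeGroup.mul_mk, FreeGroup.mul_mk]
            congr 1
            simp
    · -- p = y :: p'
      by_cases hxy : Cancels x y
      · -- absorb
        have hy : y = invL x := cancels_iff_eq_invL.1 hxy
        have hstep : ∀ M : List (α × Bool),
            FreeGroup.mk [x] * FreeGroup.mk (y :: M) = FreeGroup.mk M := by
          intro M
          rw [mk_cons y M, ← mul_assoc, hy, mk_single_mul_invL, one_mul]
        refine ⟨p', ρ, hrot, hp.tail, ?_, ?_, fun k => ?_⟩
        · rcases Decidable.em (p' = []) with rfl | hne'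
          · exact Jn.nil_left _
          · intro a ha b hb
            apply j1 a _ b hb
            rw [getLast?_cons_ne hne']
            exact ha
        · rcases Decidable.em (p' = []) with rfl | hne'
          · rw [invRev_nil]; exact Jn.nil_right _
          · intro a ha b hb
            apply j2 a ha b
            rw [invRev_cons, List.head?_append_of_ne_nil _ (by
              rw [Ne, invRev_eq_nil_iff]; exact hne')]
            exact hb
        · rw [key k]
          have e1 : (y :: p') ++ pw ρ k ++ FreeGroup.invRev (y :: p')
              = y :: (p' ++ pw ρ k ++ (FreeGroup.invRev p' ++ [invL y])) := by
            rw [invRev_cons]; simp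
          rw [e1, hstep]
          have e2 : p' ++ pw ρ k ++ (FreeGroup.invRev p' ++ [invL y])
              = (p' ++ pw ρ k ++ FreeGroup.invRev p') ++ [invL y] := by simp
          rw [e2, ← FreeGroup.mul_mk, mul_assoc]
          have : FreeGroup.mk [invL y] * FreeGroup.mk [invL x] = 1 := by
            rw [hy, invL_invL]
            exact mk_single_mul_invL x
          rw [this, mul_one]
      · -- prepend
        refine ⟨x :: y :: p', ρ, hrot, List.isChain_cons_cons.2 ⟨hxy, hp⟩, ?_, ?_, fun k => ?_⟩
        · intro a ha b hb
          apply j1 a _ b hb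
          rw [getLast?_cons_ne (by simp)] at ha
          exact ha
        · intro a ha b hb
          apply j2 a ha b
          rw [invRev_cons, List.head?_append_of_ne_nil _ (by
            rw [Ne, invRev_eq_nil_iff]; simp)] at hb
          exact hb
        · rw [key k]
          rw [invRev_cons (x := x)]
          rw [show FreeGroup.mk [invL x] = (FreeGroup.mk [invL x]) from rfl]
          rw [FreeGroup.mul_mk, FreeGroup.mul_mk]
          congr 1
          simp

theorem conj_toWord (c : List (α × Bool)) (hc : Pw c) (hcne : c ≠ []) (l : List (α × Bool)) :
    ∃ p ρ, IsRot ρ c ∧ ∀ k : ℕ, 1 ≤ k →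
      (FreeGroup.mk l * (FreeGroup.mk c) ^ k * (FreeGroup.mk l)⁻¹).toWord
        = p ++ pw ρ k ++ FreeGroup.invRev p := by
  obtain ⟨p, ρ, hrot, hp, j1, j2, heq⟩ := conj_structure c hcne l
  refine ⟨p, ρ, hrot, fun k hk => ?_⟩
  rw [heq k, toWord_mk_eq (rw_concat hk hp (hrot.pos hc) (hrot.ne_nil hcne) j1 j2)]

end GoodBasis
-- Part 3: coset space, readability
namespace GoodBasis
variable {β : Type*} [DecidableEq β]

/-- the right coset space -/
abbrev Q (H : Subgroup (FreeGroup β)) := Quotient (QuotientGroup.rightRel H)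

variable {H : Subgroup (FreeGroup β)}

/-- right multiplication action on right cosets -/
def act (q : Q H) (g : FreeGroup β) : Q H :=
  Quotient.map' (fun a => a * g) (fun a b hab => by
    rw [QuotientGroup.rightRel_apply] at hab ⊢
    simpa [mul_assoc] using hab) q

lemma act_mk (a g : FreeGroup β) : act (Quotient.mk'' a : Q H) g = Quotient.mk'' (a * g) := rfl

lemma act_mul (q : Q H) (g g' : FreeGroup β) : act (act q g) g' = act q (g * g') := by
  induction q using Quotient.inductionOn'
  simp [act_mk, mul_assoc]

lemma act_one (q : Q H) : act q 1 = q := by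
  induction q using Quotient.inductionOn'
  simp [act_mk]

lemma act_injective (g : FreeGroup β) : Function.Injective (fun q : Q H => act q g) := by
  intro q q' h
  have := congrArg (fun z => act z g⁻¹) h
  simpa [act_mul, act_one] using this

/-- base point: the coset of 1 -/
def bpt : Q H := Quotient.mk'' 1

lemma act_bpt_of_mem {h : FreeGroup β} (hh : h ∈ H) : act (bpt : Q H) h = bpt := by
  rw [bpt, act_mk]
  apply Quotient.sound'
  rw [QuotientGroup.rightRel_apply]
  simpa using H.inv_mem hh

/-- Reading a word from a coset, staying inside a vertex set `V`. -/
def ReadFrom (V : Set (Q H)) (q : Q H) (w : List (β × Bool)) : Prop :=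
  ∀ l, l <+: w → act q (FreeGroup.mk l) ∈ V

lemma ReadFrom.mem_of {V : Set (Q H)} {q w} (h : ReadFrom V q w) : q ∈ V := by
  have := h [] (List.nil_prefix)
  rwa [show FreeGroup.mk ([] : List (β × Bool)) = 1 from FreeGroup.one_eq_mk.symm, act_one] at this

lemma ReadFrom.of_prefix {V : Set (Q H)} {q w l} (h : ReadFrom V q w) (hl : l <+: w) :
    ReadFrom V q l := fun l' hl' => h l' (hl'.trans hl)

lemma prefix_append_cases {l w₁ w₂ : List (β × Bool)} (h : l <+: w₁ ++ w₂) :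
    l <+: w₁ ∨ ∃ l₂, l = w₁ ++ l₂ ∧ l₂ <+: w₂ := by
  rcases le_or_gt l.length w₁.length with hle | hlt
  · exact Or.inl (List.prefix_of_prefix_length_le h (List.prefix_append w₁ w₂) hle)
  · right
    have hw₁ : w₁ <+: l :=
      List.prefix_of_prefix_length_le (List.prefix_append w₁ w₂) h (Nat.le_of_lt hlt)
    obtain ⟨l₂, rfl⟩ := hw₁
    refine ⟨l₂, rfl, ?_⟩
    obtain ⟨t, ht⟩ := h
    rw [List.append_assoc] at ht
    exact ⟨t, List.append_cancel_left ht⟩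

lemma readFrom_append {V : Set (Q H)} {q : Q H} {w₁ w₂ : List (β × Bool)} :
    ReadFrom V q (w₁ ++ w₂) ↔
      ReadFrom V q w₁ ∧ ReadFrom V (act q (FreeGroup.mk w₁)) w₂ := by
  constructor
  · intro h
    refine ⟨h.of_prefix (List.prefix_append w₁ w₂), fun l hl => ?_⟩
    rw [act_mul, FreeGroup.mul_mk]
    apply h
    obtain ⟨t, rfl⟩ := hl
    exact ⟨t, by simp⟩
  · rintro ⟨h1, h2⟩ l hl
    rcases prefix_append_cases hl with hl1 | ⟨l₂, rfl, hl2⟩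
    · exact h1 l hl1
    · rw [← FreeGroup.mul_mk, ← act_mul]
      exact h2 l₂ hl2

lemma pw_prefix_mono (w : List (β × Bool)) {a b : ℕ} (hab : a ≤ b) : pw w a <+: pw w b := by
  obtain ⟨d, rfl⟩ := Nat.exists_eq_add_of_le hab
  rw [pw_add]
  exact List.prefix_append _ _

/-- Infinite readability: all powers of `w` can be read from `q` inside `V`. -/
def InfRead (V : Set (Q H)) (q : Q H) (w : List (β × Bool)) : Prop :=
  ∀ k : ℕ, ReadFrom V q (pw w k)

lemma InfRead.readFrom {V : Set (Q H)} {q w} (h : InfRead V q w) : ReadFrom V q w := by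
  have := h 1
  rwa [pw_one] at this

lemma InfRead.step {V : Set (Q H)} {q w} (h : InfRead V q w) :
    InfRead V (act q (FreeGroup.mk w)) w := by
  intro k
  have := h (k + 1)
  rw [pw_succ, readFrom_append] at this
  exact this.2

lemma infRead_of_period {V : Set (Q H)} {q : Q H} {w : List (β × Bool)} {d : ℕ} (hd : 1 ≤ d)
    (hper : act q (FreeGroup.mk w ^ d) = q) (hread : ReadFrom V q (pw w d)) :
    InfRead V q w := by
  intro k
  induction k using Nat.strong_induction_on with
  | _ k ih =>
    rcases le_or_gt k d with hk | hk
    · exact hread.of_prefix (pw_prefix_mono w hk)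
    · obtain ⟨e, rfl⟩ := Nat.exists_eq_add_of_le (Nat.le_of_lt hk)
      rw [pw_add, readFrom_append]
      refine ⟨hread, ?_⟩
      rw [mk_pw, hper]
      exact ih e (by omega)

lemma exists_period {V : Set (Q H)} (hV : V.Finite) {q : Q H} {w : List (β × Bool)}
    (h : ReadFrom V q (pw w (hV.toFinset.card + 1))) :
    ∃ d, 1 ≤ d ∧ d ≤ hV.toFinset.card ∧ act q (FreeGroup.mk w ^ d) = q ∧
      ReadFrom V q (pw w d) := by
  set N := hV.toFinset.card with hN
  have hmem : ∀ j : Fin (N + 1), act q (FreeGroup.mk w ^ (j : ℕ)) ∈ hV.toFinset := by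
    intro j
    rw [Set.Finite.mem_toFinset, ← mk_pw]
    exact h _ (pw_prefix_mono w (by omega))
  obtain ⟨i, -, j, -, hij, hfij⟩ :=
    Finset.exists_ne_map_eq_of_card_lt_of_maps_to
      (s := (Finset.univ : Finset (Fin (N + 1))))
      (t := hV.toFinset) (by simp; omega) (fun j _ => hmem j)
  -- wlog i < j
  rcases Nat.lt_or_ge (i : ℕ) (j : ℕ) with hlt | hge
  · obtain ⟨d, hd⟩ := Nat.exists_eq_add_of_le (Nat.le_of_lt hlt)
    refine ⟨d, by omega, by omega, ?_, h.of_prefix (pw_prefix_mono w (by omega))⟩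
    have : act q (FreeGroup.mk w ^ d * FreeGroup.mk w ^ (i : ℕ))
        = act q (FreeGroup.mk w ^ (i : ℕ)) := by
      rw [← pow_add]
      rw [show d + (i : ℕ) = (j : ℕ) by omega]
      exact hfij.symm
    have h2 : act (act q (FreeGroup.mk w ^ d)) (FreeGroup.mk w ^ (i : ℕ))
        = act q (FreeGroup.mk w ^ (i : ℕ)) := by rw [act_mul]; exact this
    exact act_injective _ h2
  · have hlt : (j : ℕ) < (i : ℕ) := by
      rcases Nat.lt_or_ge (j : ℕ) (i : ℕ) with h' | h'
      · exact h'
      · exact absurd (Fin.ext (by omega)) hij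
    obtain ⟨d, hd⟩ := Nat.exists_eq_add_of_le (Nat.le_of_lt hlt)
    refine ⟨d, by omega, by omega, ?_, h.of_prefix (pw_prefix_mono w (by omega))⟩
    have : act q (FreeGroup.mk w ^ d * FreeGroup.mk w ^ (j : ℕ))
        = act q (FreeGroup.mk w ^ (j : ℕ)) := by
      rw [← pow_add]
      rw [show d + (j : ℕ) = (i : ℕ) by omega]
      exact hfij
    have h2 : act (act q (FreeGroup.mk w ^ d)) (FreeGroup.mk w ^ (j : ℕ))
        = act q (FreeGroup.mk w ^ (j : ℕ)) := by rw [act_mul]; exact this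
    exact act_injective _ h2

lemma infRead_of_long {V : Set (Q H)} (hV : V.Finite) {q : Q H} {w : List (β × Bool)}
    (h : ReadFrom V q (pw w (hV.toFinset.card + 1))) : InfRead V q w := by
  obtain ⟨d, hd1, -, hper, hread⟩ := exists_period hV h
  exact infRead_of_period hd1 hper hread

lemma InfRead.period_factorial {V : Set (Q H)} (hV : V.Finite) {q : Q H} {w : List (β × Bool)}
    (h : InfRead V q w) : act q (FreeGroup.mk w ^ (hV.toFinset.card + 1).factorial) = q := by
  obtain ⟨d, hd1, hdN, hper, -⟩ := exists_period hV (h _)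
  obtain ⟨m, hm⟩ : d ∣ (hV.toFinset.card + 1).factorial :=
    Nat.dvd_factorial (by omega) (by omega)
  rw [hm, pow_mul]
  clear hm
  induction m with
  | zero => simpa using act_one q
  | succ m ih =>
    rw [pow_succ, ← act_mul, ih, hper]

end GoodBasis
-- Part 4: rotation shift, V0, readability of H, infinite quotient, closed-set lemma
namespace GoodBasis
variable {β : Type*} [DecidableEq β] {H : Subgroup (FreeGroup β)}

lemma pw_rot_identity (u v : List (β × Bool)) (J : ℕ) :
    v ++ pw (u ++ v) J = pw (v ++ u) J ++ v := by
  induction J with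
  | zero => simp [pw_zero]
  | succ J ih =>
    rw [pw_succ, show v ++ ((u ++ v) ++ pw (u ++ v) J) = (v ++ u) ++ (v ++ pw (u ++ v) J) by simp,
      ih, pw_succ]
    simp

lemma InfRead.rot {V : Set (Q H)} {q : Q H} {ρ c : List (β × Bool)} (hrot : IsRot ρ c)
    (h : InfRead V q ρ) : ∃ q', InfRead V q' c := by
  obtain ⟨u, v, rfl, rfl⟩ := hrot
  refine ⟨act q (FreeGroup.mk v), fun J => ?_⟩
  have hpre : pw (v ++ u) J ++ v <+: pw (v ++ u) (J + 1) := by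
    rw [pw_succ']
    exact ⟨u, by simp⟩
  have h1 : ReadFrom V q (pw (v ++ u) J ++ v) := (h (J + 1)).of_prefix hpre
  rw [← pw_rot_identity, readFrom_append] at h1
  exact h1.2

/-- The core vertex set: cosets of prefixes of the generators (and their inverses),
together with the base point. -/
def V0 (H : Subgroup (FreeGroup β)) (T : Finset (FreeGroup β)) : Set (Q H) :=
  {q | q = bpt ∨ ∃ s ∈ T, ∃ l : List (β × Bool),
    (l <+: FreeGroup.toWord s ∨ l <+: FreeGroup.toWord s⁻¹) ∧ q = act bpt (FreeGroup.mk l)}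

lemma bpt_mem_V0 (T : Finset (FreeGroup β)) : (bpt : Q H) ∈ V0 H T := Or.inl rfl

lemma V0_finite (T : Finset (FreeGroup β)) : (V0 H T).Finite := by
  have hsub : V0 H T ⊆ {bpt} ∪ ⋃ s ∈ (T : Set (FreeGroup β)),
      (fun l => act bpt (FreeGroup.mk l)) ''
        {l | l ∈ ((FreeGroup.toWord s).inits ++ (FreeGroup.toWord s⁻¹).inits)} := by
    rintro q (rfl | ⟨s, hs, l, hl, rfl⟩)
    · exact Or.inl rfl
    · refine Or.inr (Set.mem_biUnion hs ⟨l, ?_, rfl⟩)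
      simp only [Set.mem_setOf_eq, List.mem_append, List.mem_inits]
      exact hl
  refine Set.Finite.subset (Set.Finite.union (Set.finite_singleton _) ?_) hsub
  refine Set.Finite.biUnion (T.finite_toSet) fun s _ => Set.Finite.image _ ?_
  exact (((FreeGroup.toWord s).inits ++ (FreeGroup.toWord s⁻¹).inits)).finite_toSet.subset
    (fun l hl => by simpa using hl)

lemma prefix_reduce : ∀ (W : List (β × Bool)) (l : List (β × Bool)),
    l <+: FreeGroup.reduce W → ∃ l', l' <+: W ∧ FreeGroup.mk l = FreeGroup.mk l' := by
  intro W
  induction W with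
  | nil =>
    intro l hl
    rw [FreeGroup.reduce_nil] at hl
    rw [List.prefix_nil.1 hl]
    exact ⟨[], List.nil_prefix, rfl⟩
  | cons x W ih =>
    intro l hl
    rw [FreeGroup.reduce.cons] at hl
    cases hred : FreeGroup.reduce W with
    | nil =>
      rw [hred] at hl
      simp only at hl
      rcases l with _ | ⟨z, l'⟩
      · exact ⟨[], List.nil_prefix, rfl⟩
      · obtain ⟨t, ht⟩ := hl
        simp only [List.cons_append, List.cons.injEq] at ht
        obtain ⟨rfl, ht2⟩ := ht
        rcases List.append_eq_nil_iff.1 ht2 with ⟨rfl, -⟩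
        exact ⟨[z], ⟨W, rfl⟩, rfl⟩
    | cons y t =>
      rw [hred] at hl
      simp only at hl
      by_cases hc : x.1 = y.1 ∧ x.2 = !y.2
      · rw [if_pos hc] at hl
        obtain ⟨l', hl', heq⟩ := ih (y :: l) (by
          rw [hred]
          exact List.cons_prefix_cons.2 ⟨rfl, hl⟩)
        refine ⟨x :: l', List.cons_prefix_cons.2 ⟨rfl, hl'⟩, ?_⟩
        have hy : y = invL x := cancels_iff_eq_invL.1 hc
        calc FreeGroup.mk l
            = (FreeGroup.mk [x] * FreeGroup.mk [y]) * FreeGroup.mk l := by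
              rw [hy, mk_single_mul_invL, one_mul]
          _ = FreeGroup.mk [x] * FreeGroup.mk (y :: l) := by rw [mul_assoc, ← mk_cons]
          _ = FreeGroup.mk [x] * FreeGroup.mk l' := by rw [heq]
          _ = FreeGroup.mk (x :: l') := (mk_cons x l').symm
      · rw [if_neg hc] at hl
        rcases l with _ | ⟨z, l₂⟩
        · exact ⟨[], List.nil_prefix, rfl⟩
        · obtain ⟨rfl, hl₂⟩ := List.cons_prefix_cons.1 hl
          obtain ⟨l'', hl'', heq⟩ := ih l₂ (by rw [hred]; exact hl₂)
          refine ⟨z :: l'', List.cons_prefix_cons.2 ⟨rfl, hl''⟩, ?_⟩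
          rw [mk_cons, heq, ← mk_cons]

lemma mk_flatten_map_toWord (L : List (FreeGroup β)) :
    FreeGroup.mk ((L.map FreeGroup.toWord).flatten) = L.prod := by
  induction L with
  | nil => simp [FreeGroup.one_eq_mk]
  | cons a L ih =>
    simp only [List.map_cons, List.flatten_cons, List.prod_cons, ← FreeGroup.mul_mk, ih,
      FreeGroup.mk_toWord]

lemma read_concat {T : Finset (FreeGroup β)}
    (hT : Subgroup.closure (T : Set (FreeGroup β)) = H) :
    ∀ L : List (FreeGroup β),
      (∀ y ∈ L, y ∈ (T : Set (FreeGroup β)) ∪ (T : Set (FreeGroup β))⁻¹) →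
      ∀ l, l <+: (L.map FreeGroup.toWord).flatten → act bpt (FreeGroup.mk l) ∈ V0 H T := by
  intro L
  induction L with
  | nil =>
    intro _ l hl
    simp only [List.map_nil, List.flatten_nil] at hl
    rw [List.prefix_nil.1 hl]
    rw [show FreeGroup.mk ([] : List (β × Bool)) = 1 from FreeGroup.one_eq_mk.symm, act_one]
    exact bpt_mem_V0 T
  | cons a L ih =>
    intro hmem l hl
    simp only [List.map_cons, List.flatten_cons] at hl
    rcases prefix_append_cases hl with hl1 | ⟨l₂, rfl, hl₂⟩
    · rcases hmem a (by simp) with ha | ha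
      · exact Or.inr ⟨a, ha, l, Or.inl hl1, rfl⟩
      · obtain ⟨s, hs, rfl⟩ : ∃ s ∈ T, s⁻¹ = a :=
          ⟨a⁻¹, by simpa [Set.mem_inv] using ha, inv_inv a⟩
        exact Or.inr ⟨s, hs, l, Or.inr (by simpa using hl1), rfl⟩
    · have haH : a ∈ H := by
        rcases hmem a (by simp) with ha | ha
        · rw [← hT]; exact Subgroup.subset_closure ha
        · obtain ⟨s, hs, rfl⟩ : ∃ s ∈ T, s⁻¹ = a :=
            ⟨a⁻¹, by simpa [Set.mem_inv] using ha, inv_inv a⟩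
          rw [← hT]
          exact (Subgroup.closure _).inv_mem (Subgroup.subset_closure hs)
      rw [← FreeGroup.mul_mk, ← act_mul, FreeGroup.mk_toWord, act_bpt_of_mem haH]
      exact ih (fun y hy => hmem y (by simp [hy])) l₂ hl₂

/-- every element of `H` is readable from the base point inside `V0`. -/
lemma read_H {T : Finset (FreeGroup β)}
    (hT : Subgroup.closure (T : Set (FreeGroup β)) = H) {h : FreeGroup β} (hh : h ∈ H) :
    ReadFrom (V0 H T) bpt (FreeGroup.toWord h) := by
  have hh' : h ∈ Submonoid.closure ((T : Set (FreeGroup β)) ∪ (T : Set (FreeGroup β))⁻¹) := by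
    have : h ∈ (Subgroup.closure (T : Set (FreeGroup β))).toSubmonoid := by
      rw [hT]; exact hh
    rwa [Subgroup.closure_toSubmonoid] at this
  obtain ⟨L, hLmem, hLprod⟩ := Submonoid.exists_list_of_mem_closure hh'
  intro l hl
  have htw : FreeGroup.toWord h = FreeGroup.reduce ((L.map FreeGroup.toWord).flatten) := by
    rw [← FreeGroup.toWord_mk, mk_flatten_map_toWord, hLprod]
  rw [htw] at hl
  obtain ⟨l', hl', heq⟩ := prefix_reduce _ l hl
  rw [heq]
  exact read_concat hT L hLmem l' hl'

lemma infinite_Q (hinf : H.index = 0) : Infinite (Q H) := by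
  have hQ : Nat.card (Q H) = 0 := by
    rw [Nat.card_congr (QuotientGroup.quotientRightRelEquivQuotientLeftRel H)]
    exact hinf
  rcases Nat.card_eq_zero.1 hQ with hempty | hinf'
  · exact (hempty.false (bpt : Q H)).elim
  · exact hinf'

lemma eq_univ_of_closed {W : Set (Q H)} (hWfin : W.Finite) (hne : W.Nonempty)
    {S : Set (FreeGroup β)} (hS : Subgroup.closure S = ⊤)
    (hstep : ∀ g ∈ S, ∀ x ∈ W, act x g ∈ W) : ∀ q : Q H, q ∈ W := by
  have key : ∀ g : FreeGroup β, ∀ x ∈ W, act x g ∈ W := by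
    intro g
    have hg : g ∈ Subgroup.closure S := by rw [hS]; trivial
    induction hg using Subgroup.closure_induction with
    | mem y hy => exact hstep y hy
    | one => intro x hx; rwa [act_one]
    | mul a b _ _ hia hib => intro x hx; rw [← act_mul]; exact hib _ (hia x hx)
    | inv a _ hia =>
      intro x hx
      have hmapsto : (fun z => act z a) '' W ⊆ W := by
        rintro _ ⟨y, hy, rfl⟩; exact hia y hy
      have himg : (fun z => act z a) '' W = W := by
        apply Set.eq_of_subset_of_ncard_le hmapsto _ hWfin
        rw [Set.ncard_image_of_injective _ (act_injective a)]
      rw [← himg] at hx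
      obtain ⟨y, hy, hxy⟩ := hx
      have : act x a⁻¹ = y := by rw [← hxy]; rw [act_mul, mul_inv_cancel, act_one]
      rw [this]; exact hy
  intro q
  obtain ⟨x₀, hx₀⟩ := hne
  induction q using Quotient.inductionOn' with
  | h t =>
    obtain ⟨r, hr⟩ := Quotient.exists_rep x₀
    have : act x₀ (r⁻¹ * t) = Quotient.mk'' t := by
      rw [← hr]
      show act (Quotient.mk'' r) _ = _
      rw [act_mk, mul_inv_cancel_left]
    rw [← this]
    exact key _ x₀ hx₀

end GoodBasis
-- Part 5: the descent procedure
namespace GoodBasis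
variable {β : Type*} [DecidableEq β] [Fintype β] [Nonempty β] {H : Subgroup (FreeGroup β)}

/-- domain of readability of `w` -/
def DomS (V : Set (Q H)) (w : List (β × Bool)) : Set (Q H) := {q | ReadFrom V q w}

/-- set of vertices from which `w` can be read forever -/
def CycS (V : Set (Q H)) (w : List (β × Bool)) : Set (Q H) := {q | InfRead V q w}

lemma cycS_subset_domS (V : Set (Q H)) (w : List (β × Bool)) : CycS V w ⊆ DomS V w :=
  fun _ h => h.readFrom

lemma domS_subset (V : Set (Q H)) (w : List (β × Bool)) : DomS V w ⊆ V :=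
  fun _ h => h.mem_of

lemma cycS_step {V : Set (Q H)} {w : List (β × Bool)} {q : Q H} (h : q ∈ CycS V w) :
    act q (FreeGroup.mk w) ∈ CycS V w := InfRead.step h

/-- the uniform exponent -/
noncomputable def KK {V : Set (Q H)} (hV : V.Finite) : ℕ := (hV.toFinset.card + 1).factorial

lemma KK_ge {V : Set (Q H)} (hV : V.Finite) : hV.toFinset.card + 1 ≤ KK hV :=
  Nat.self_le_factorial _

lemma domS_comp {V : Set (Q H)} (hV : V.Finite) (w u : List (β × Bool)) (q : Q H) :
    q ∈ DomS V (w ++ pw u (KK hV)) ↔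
      q ∈ DomS V w ∧ act q (FreeGroup.mk w) ∈ CycS V u := by
  constructor
  · intro h
    rw [DomS, Set.mem_setOf_eq, readFrom_append] at h
    refine ⟨h.1, ?_⟩
    apply infRead_of_long hV
    exact h.2.of_prefix (pw_prefix_mono u (KK_ge hV))
  · rintro ⟨h1, h2⟩
    rw [DomS, Set.mem_setOf_eq, readFrom_append]
    exact ⟨h1, h2 (KK hV)⟩

lemma act_comp {V : Set (Q H)} (hV : V.Finite) {w u : List (β × Bool)} {q : Q H}
    (hq : act q (FreeGroup.mk w) ∈ CycS V u) :
    act q (FreeGroup.mk (w ++ pw u (KK hV))) = act q (FreeGroup.mk w) := by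
  rw [← FreeGroup.mul_mk, ← act_mul, mk_pw]
  exact InfRead.period_factorial hV hq

lemma cycS_comp_empty {V : Set (Q H)} (hV : V.Finite) {w u : List (β × Bool)}
    (hu : CycS V u = ∅) : CycS V (w ++ pw u (KK hV)) = ∅ := by
  ext q
  simp only [Set.mem_empty_iff_false, iff_false]
  intro h
  have h1 : q ∈ DomS V (w ++ pw u (KK hV)) := cycS_subset_domS _ _ h
  rw [domS_comp hV] at h1
  rw [hu] at h1
  exact h1.2

/-- transvection automorphism of the free group -/
def tvE (tgt : β) (c : β → ℕ) (h : c tgt = 0) : FreeGroup β ≃* FreeGroup β := by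
  refine MonoidHom.toMulEquiv
    (FreeGroup.lift (fun j => FreeGroup.of j * (FreeGroup.of tgt) ^ (c j)))
    (FreeGroup.lift (fun j => FreeGroup.of j * ((FreeGroup.of tgt) ^ (c j))⁻¹)) ?_ ?_ <;>
  · apply FreeGroup.ext_hom
    intro a
    simp [h, mul_assoc]

lemma tvE_of (tgt : β) (c : β → ℕ) (h : c tgt = 0) (j : β) :
    tvE tgt c h (FreeGroup.of j) = FreeGroup.of j * (FreeGroup.of tgt) ^ (c j) := by
  simp [tvE, MonoidHom.toMulEquiv]

lemma of_eq_mk (i : β) : FreeGroup.of i = FreeGroup.mk [(i, true)] := rfl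

/-- the words in the procedure invariant give a generating set -/
lemma closure_range_top {ws : β → List (β × Bool)}
    (e : FreeGroup β ≃* FreeGroup β) (he : ∀ i, e (FreeGroup.of i) = FreeGroup.mk (ws i)) :
    Subgroup.closure (Set.range fun i => FreeGroup.mk (ws i)) = ⊤ := by
  have h1 : (Set.range fun i => FreeGroup.mk (ws i))
      = (e : FreeGroup β →* FreeGroup β) '' (Set.range (FreeGroup.of : β → FreeGroup β)) := by
    rw [← Set.range_comp]
    ext z
    simp only [Set.mem_range, Function.comp_apply]
    constructor
    · rintro ⟨i, rfl⟩
      exact ⟨i, he i⟩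
    · rintro ⟨i, rfl⟩
      exact ⟨i, (he i).symm⟩
  rw [h1, ← MonoidHom.map_closure, FreeGroup.closure_range_of]
  ext z
  simp only [Subgroup.mem_top, iff_true]
  exact ⟨e.symm z, trivial, by simp⟩

/-- The descent procedure: starting from any basis-word system, we can reach one where no
word admits an infinite readable cycle. -/
lemma procedure {V : Set (Q H)} (hV : V.Finite) (hVb : (bpt : Q H) ∈ V)
    (hinf : H.index = 0) :
    ∀ (M : ℕ) (ws : β → List (β × Bool)),
      (∀ i, Pw (ws i)) → (∀ i, ws i ≠ []) →
      (∃ e : FreeGroup β ≃* FreeGroup β, ∀ i, e (FreeGroup.of i) = FreeGroup.mk (ws i)) →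
      (∑ i : β, (DomS V (ws i)).ncard) ≤ M →
      ∃ ws' : β → List (β × Bool),
        (∀ i, Pw (ws' i)) ∧ (∀ i, ws' i ≠ []) ∧
        (∃ e : FreeGroup β ≃* FreeGroup β, ∀ i, e (FreeGroup.of i) = FreeGroup.mk (ws' i)) ∧
        (∀ i, CycS V (ws' i) = ∅) := by
  intro M
  induction M with
  | zero =>
    intro ws hPw hne he hM
    -- all domains empty hence all cycles empty
    refine ⟨ws, hPw, hne, he, fun i => ?_⟩
    have hdom : (DomS V (ws i)).ncard = 0 := by
      have : (DomS V (ws i)).ncard ≤ ∑ j : β, (DomS V (ws j)).ncard :=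
        Finset.single_le_sum (f := fun j => (DomS V (ws j)).ncard)
          (fun j _ => Nat.zero_le _) (Finset.mem_univ i)
      omega
    have hfin : (DomS V (ws i)).Finite := hV.subset (domS_subset V (ws i))
    have : DomS V (ws i) = ∅ := by
      rcases Set.eq_empty_or_nonempty (DomS V (ws i)) with h | h
      · exact h
      · exact absurd hdom (by
          have hpos := (Set.ncard_pos hfin).2 h
          omega)
    apply Set.eq_empty_of_subset_empty
    rw [← this]
    exact cycS_subset_domS V (ws i)
  | succ M ih =>
    intro ws hPw hne he hM
    by_cases hsucc : ∃ i₀, CycS V (ws i₀) = ∅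
    · -- SUCCESS: one word is cycle-free; transvect all others by it
      obtain ⟨i₀, hi₀⟩ := hsucc
      classical
      set ws2 : β → List (β × Bool) :=
        (fun l => if l = i₀ then ws i₀ else ws l ++ pw (ws i₀) (KK hV)) with hws2
      have hws2i : ∀ l, ws2 l = if l = i₀ then ws i₀ else ws l ++ pw (ws i₀) (KK hV) :=
        fun l => rfl
      refine ⟨ws2, ?_, ?_, ?_, ?_⟩
      · intro i
        rw [hws2i]
        by_cases h : i = i₀
        · rw [if_pos h]
          exact hPw i₀
        · rw [if_neg h]
          intro x hx
          rcases List.mem_append.1 hx with h1 | h2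
          · exact hPw i x h1
          · exact hPw i₀ x (pw_mem h2)
      · intro i
        rw [hws2i]
        by_cases h : i = i₀
        · rw [if_pos h]
          exact hne i₀
        · rw [if_neg h]
          intro hcontra
          rcases List.append_eq_nil_iff.1 hcontra with ⟨h1, -⟩
          exact hne i h1
      · obtain ⟨e, heq⟩ := he
        refine ⟨(tvE i₀ (fun l => if l = i₀ then 0 else KK hV) (by
          show (if i₀ = i₀ then 0 else KK hV) = 0
          rw [if_pos rfl])).trans e, fun i => ?_⟩
        rw [MulEquiv.trans_apply, tvE_of, hws2i]
        beta_reduce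
        by_cases h : i = i₀
        · rw [if_pos h, if_pos h, pow_zero, mul_one, heq, h]
        · rw [if_neg h, if_neg h, map_mul, map_pow, heq, heq, ← mk_pw, FreeGroup.mul_mk]
      · intro i
        rw [hws2i]
        by_cases h : i = i₀
        · rw [if_pos h]
          exact hi₀
        · rw [if_neg h]
          exact cycS_comp_empty hV hi₀
    · push_neg at hsucc
      by_cases hmove : ∃ i j, i ≠ j ∧
          ∃ q, q ∈ DomS V (ws i) ∧ act q (FreeGroup.mk (ws i)) ∉ CycS V (ws j)
      · -- MOVE: strict decrease of the measure
        obtain ⟨i, j, hij, q, hq1, hq2⟩ := hmove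
        classical
        set w' : List (β × Bool) := ws i ++ pw (ws j) (KK hV) with hw'
        set ws' : β → List (β × Bool) := Function.update ws i w' with hws'
        have hPw' : ∀ l, Pw (ws' l) := by
          intro l
          by_cases h : l = i
          · subst h
            rw [hws', Function.update_self]
            intro x hx
            rcases List.mem_append.1 hx with h1 | h2
            · exact hPw l x h1
            · exact hPw j x (pw_mem h2)
          · rw [hws', Function.update_of_ne h]
            exact hPw l
        have hne' : ∀ l, ws' l ≠ [] := by
          intro l
          by_cases h : l = i
          · subst h
            rw [hws', Function.update_self]
            intro hcontra
            rcases List.append_eq_nil_iff.1 hcontra with ⟨h1, -⟩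
            exact hne l h1
          · rw [hws', Function.update_of_ne h]
            exact hne l
        have he' : ∃ e : FreeGroup β ≃* FreeGroup β,
            ∀ l, e (FreeGroup.of l) = FreeGroup.mk (ws' l) := by
          obtain ⟨e, heq⟩ := he
          refine ⟨(tvE j (fun l => if l = i then KK hV else 0)
            (by
              show (if j = i then KK hV else 0) = 0
              rw [if_neg (Ne.symm hij)])).trans e, fun l => ?_⟩
          rw [MulEquiv.trans_apply, tvE_of]
          beta_reduce
          by_cases h : l = i
          · subst h
            rw [if_pos rfl, map_mul, map_pow, heq, heq, ← mk_pw, FreeGroup.mul_mk,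
              hws', Function.update_self]
          · rw [if_neg h, pow_zero, mul_one, heq, hws', Function.update_of_ne h]
        -- measure decreases
        have hsub : DomS V w' ⊆ DomS V (ws i) := by
          intro z hz
          exact ((domS_comp hV _ _ z).1 hz).1
        have hqnot : q ∉ DomS V w' := by
          intro hcontra
          exact hq2 ((domS_comp hV _ _ q).1 hcontra).2
        have hssub : DomS V w' ⊂ DomS V (ws i) := ⟨hsub, fun hcontra => hqnot (hcontra hq1)⟩
        have hfin : (DomS V (ws i)).Finite := hV.subset (domS_subset V (ws i))
        have hlt : (DomS V w').ncard < (DomS V (ws i)).ncard := Set.ncard_lt_ncard hssub hfin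
        have hsum : (∑ l : β, (DomS V (ws' l)).ncard) < ∑ l : β, (DomS V (ws l)).ncard := by
          apply Finset.sum_lt_sum
          · intro l _
            by_cases h : l = i
            · rw [h, hws', Function.update_self]
              exact Nat.le_of_lt hlt
            · rw [hws', Function.update_of_ne h]
          · exact ⟨i, Finset.mem_univ i, by rw [hws', Function.update_self]; exact hlt⟩
        exact ih ws' hPw' hne' he' (by omega)
      · -- FIXPOINT: contradiction with infinite index
        exfalso
        push_neg at hmove
        classical
        set W : Set (Q H) := ⋂ i, CycS V (ws i) with hW
        have hstepW : ∀ i, ∀ x ∈ W, act x (FreeGroup.mk (ws i)) ∈ W := by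
          intro i x hx
          rw [hW, Set.mem_iInter] at hx ⊢
          intro j
          by_cases h : i = j
          · subst h
            exact cycS_step (hx i)
          · exact hmove i j h _ (cycS_subset_domS _ _ (hx i)) 
        have hWne : W.Nonempty := by
          obtain ⟨i₀⟩ := (inferInstance : Nonempty β)
          obtain ⟨v, hv⟩ := hsucc i₀
          refine ⟨act v (FreeGroup.mk (ws i₀)), ?_⟩
          rw [hW, Set.mem_iInter]
          intro j
          by_cases h : i₀ = j
          · subst h
            exact cycS_step hv
          · exact hmove i₀ j h _ (cycS_subset_domS _ _ hv)
        have hWfin : W.Finite := by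
          apply hV.subset
          obtain ⟨i₀⟩ := (inferInstance : Nonempty β)
          intro x hx
          rw [hW, Set.mem_iInter] at hx
          exact domS_subset V (ws i₀) (cycS_subset_domS _ _ (hx i₀))
        obtain ⟨e, heq⟩ := he
        have hclos := closure_range_top e heq
        have hall : ∀ q : Q H, q ∈ W := by
          apply eq_univ_of_closed hWfin hWne hclos
          rintro g ⟨i, rfl⟩ x hx
          exact hstepW i x hx
        have : Finite (Q H) := by
          rw [← Set.finite_univ_iff]
          apply hWfin.subset
          intro q _
          exact hall q
        haveI := infinite_Q hinf
        exact not_finite (Q H)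

end GoodBasis
-- Part 6: the main theorem for free groups
namespace GoodBasis
variable {β : Type*} [DecidableEq β] [Fintype β] [Nonempty β]

theorem main_free (H : Subgroup (FreeGroup β)) (hfg : H.FG) (hinf : H.index = 0) :
    ∃ e : FreeGroup β ≃* FreeGroup β, ∀ (i : β) (g : FreeGroup β) (m : ℤ),
      (e (FreeGroup.of i)) ^ m ∈ Subgroup.map (MulAut.conj g).toMonoidHom H →
      (e (FreeGroup.of i)) ^ m = 1 := by
  classical
  obtain ⟨T, hT⟩ := hfg
  have hV : (V0 H T).Finite := V0_finite T
  have hVb : (bpt : Q H) ∈ V0 H T := bpt_mem_V0 T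
  obtain ⟨ws, hPw, hne, ⟨e, heq⟩, hCyc⟩ :=
    procedure hV hVb hinf (∑ i : β, (DomS (V0 H T) ([((i : β), true)])).ncard)
      (fun i => [(i, true)])
      (fun i => by intro x hx; simp at hx; rw [hx])
      (fun i => by simp)
      ⟨MulEquiv.refl _, fun i => rfl⟩
      (le_refl _)
  refine ⟨e, ?_⟩
  intro i g m hmem
  rw [Subgroup.mem_map] at hmem
  obtain ⟨h, hh, hgh⟩ := hmem
  have hgh' : g * h * g⁻¹ = (e (FreeGroup.of i)) ^ m := by
    rw [← hgh]
    simp [MulAut.conj_apply]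
  have aux : ∀ (mp : ℕ), 1 ≤ mp → ∀ (g' h' : FreeGroup β), h' ∈ H →
      g' * h' * g'⁻¹ = (e (FreeGroup.of i)) ^ (mp : ℕ) → False := by
    intro mp hmp g' h' hh' heqc
    have hx : e (FreeGroup.of i) = FreeGroup.mk (ws i) := heq i
    rw [hx] at heqc
    obtain ⟨p, ρ, hrot, htw⟩ := conj_toWord (ws i) (hPw i) (hne i) (FreeGroup.toWord g'⁻¹)
    set N := hV.toFinset.card with hN
    have hs : 1 ≤ mp * (N + 1) := by
      have : 1 * 1 ≤ mp * (N + 1) := Nat.mul_le_mul (by omega) (by omega)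
      omega
    have hpow : FreeGroup.mk (FreeGroup.toWord g'⁻¹) * (FreeGroup.mk (ws i)) ^ (mp * (N + 1))
        * (FreeGroup.mk (FreeGroup.toWord g'⁻¹))⁻¹ = h' ^ (N + 1) := by
      rw [FreeGroup.mk_toWord]
      have h1 : h' = g'⁻¹ * (FreeGroup.mk (ws i)) ^ (mp : ℕ) * g' := by
        rw [← heqc]; group
      rw [h1]
      have h2 := conj_pow' g'⁻¹ ((FreeGroup.mk (ws i)) ^ (mp : ℕ)) (N + 1)
      rw [inv_inv] at h2
      rw [h2, ← pow_mul]
      group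
    have hhs : h' ^ (N + 1) ∈ H := H.pow_mem hh' (N + 1)
    have hread := read_H hT hhs
    have htww : FreeGroup.toWord (h' ^ (N + 1))
        = p ++ pw ρ (mp * (N + 1)) ++ FreeGroup.invRev p := by
      rw [← hpow]
      exact htw _ hs
    rw [htww, List.append_assoc, readFrom_append] at hread
    have hmid := hread.2.of_prefix (List.prefix_append _ _)
    have hlong : ReadFrom (V0 H T) (act bpt (FreeGroup.mk p)) (pw ρ (hV.toFinset.card + 1)) :=
      hmid.of_prefix (pw_prefix_mono ρ (by
        have : N + 1 ≤ mp * (N + 1) := Nat.le_mul_of_pos_left _ (by omega)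
        omega))
    have hinfρ := infRead_of_long hV hlong
    obtain ⟨q', hq'⟩ := InfRead.rot hrot hinfρ
    have hmem' : q' ∈ CycS (V0 H T) (ws i) := hq'
    rw [hCyc i] at hmem'
    exact hmem'
  rcases lt_trichotomy m 0 with hm | hm | hm
  · exfalso
    have hmp : (((-m).toNat : ℕ) : ℤ) = -m := Int.toNat_of_nonneg (by omega)
    apply aux (-m).toNat (by omega) g h⁻¹ (H.inv_mem hh)
    have h1 : g * h⁻¹ * g⁻¹ = (g * h * g⁻¹)⁻¹ := by group
    rw [h1, hgh', ← zpow_natCast, hmp, zpow_neg]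
  · rw [hm, zpow_zero]
  · exfalso
    have hmp : ((m.toNat : ℕ) : ℤ) = m := Int.toNat_of_nonneg (by omega)
    apply aux m.toNat (by omega) g h hh
    rw [hgh', ← zpow_natCast, hmp]

end GoodBasis
-- Part 7: final statement

/-- **Existence of a good basis.** Let `Γ` be a free group of finite rank `n ≥ 2`
and `H < Γ` a subgroup of finite rank and infinite index. Then there is a basis
`{x₁,…,xₙ}` of `Γ` such that for all `g ∈ Γ` and all `i`, `gHg⁻¹ ∩ ⟨xᵢ⟩ = {1}`. -/
theorem exists_basis_conjugates_avoid_cyclic {Γ : Type*} [Group Γ] (n : ℕ) (hn : 2 ≤ n)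
    (b : FreeGroupBasis (Fin n) Γ) (H : Subgroup Γ) (hfg : H.FG) (hinf : H.index = 0) :
    ∃ x : FreeGroupBasis (Fin n) Γ, ∀ (g : Γ) (i : Fin n),
      Subgroup.map (MulAut.conj g).toMonoidHom H ⊓ Subgroup.zpowers (x i) = ⊥ := by
  classical
  haveI : Nonempty (Fin n) := ⟨⟨0, by omega⟩⟩
  set φ : Γ ≃* FreeGroup (Fin n) := b.repr with hφ
  set H' : Subgroup (FreeGroup (Fin n)) := Subgroup.map φ.toMonoidHom H with hH'
  have hfg' : H'.FG := by
    obtain ⟨T, hT⟩ := hfg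
    refine ⟨T.image φ, ?_⟩
    rw [Finset.coe_image, ← MulEquiv.coe_toMonoidHom, ← MonoidHom.map_closure, hT]
  have hinf' : H'.index = 0 := by
    have heqc : H' = Subgroup.comap (φ.symm.toMonoidHom) H := by
      rw [hH', Subgroup.map_equiv_eq_comap_symm' φ H]
    rw [heqc, Subgroup.index_comap_of_surjective _ (φ.symm.surjective), hinf]
  obtain ⟨e, he⟩ := GoodBasis.main_free H' hfg' hinf'
  refine ⟨FreeGroupBasis.ofRepr (φ.trans e.symm), ?_⟩
  intro g i
  rw [Subgroup.eq_bot_iff_forall]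
  intro y hy
  rw [Subgroup.mem_inf] at hy
  obtain ⟨hy1, hy2⟩ := hy
  obtain ⟨m, hm⟩ := Subgroup.mem_zpowers_iff.1 hy2
  have hxval : (FreeGroupBasis.ofRepr (φ.trans e.symm)) i = φ.symm (e (FreeGroup.of i)) := by
    show (φ.trans e.symm).symm (FreeGroup.of i) = φ.symm (e (FreeGroup.of i))
    simp
  have hφy : φ y = (e (FreeGroup.of i)) ^ m := by
    rw [← hm, hxval, map_zpow]
    congr 1
    exact φ.apply_symm_apply _
  have hyH : (e (FreeGroup.of i)) ^ m ∈ Subgroup.map (MulAut.conj (φ g)).toMonoidHom H' := by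
    rw [← hφy]
    rw [Subgroup.mem_map] at hy1 ⊢
    obtain ⟨h, hh, hgh⟩ := hy1
    refine ⟨φ h, Subgroup.mem_map_of_mem _ hh, ?_⟩
    simp only [MulEquiv.coe_toMonoidHom, MulAut.conj_apply] at hgh ⊢
    rw [← hgh]
    simp
  have h1 := he i (φ g) m hyH
  rw [h1] at hφy
  have : φ y = φ 1 := by rw [hφy, map_one]
  exact φ.injective this
end

section
/- Let Γ be a group and H a subgroup. The inclusion of relative bounded 2-cochains into absolute bounded 2-cochains induces a map i_b : H²_b(Γ,H;ℝ) → H²_b(Γ;ℝ) which is injective and norm non-increasing with respect to the induced seminorms. -/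
/-- The inhomogeneous coboundary of a 1-cochain: `d¹b(g,h) = b(g) + b(h) − b(gh)`. -/
def d1 {Γ : Type*} [Group Γ] (b : Γ → ℝ) : Γ → Γ → ℝ :=
  fun g h => b g + b h - b (g * h)

/-- The sup norm of a 2-cochain. -/
noncomputable def supNorm2 {Γ : Type*} (z : Γ → Γ → ℝ) : ℝ :=
  ⨆ p : Γ × Γ, |z p.1 p.2|

/-- A bounded additive "character" coming from a coboundary that vanishes on `H`
must vanish on `H` (this is `H¹_b(H;ℝ) = 0`). -/
lemma bounded_hom_vanishes {Γ : Type*} [Group Γ] (H : Subgroup Γ) (b : Γ → ℝ)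
    (C : ℝ) (hb : ∀ g : Γ, |b g| ≤ C)
    (hadd : ∀ h₁ ∈ H, ∀ h₂ ∈ H, b (h₁ * h₂) = b h₁ + b h₂) :
    ∀ h ∈ H, b h = 0 := by
  intro h hh
  have hpow : ∀ n : ℕ, b (h ^ (n + 1)) = (n + 1 : ℝ) * b h := by
    intro n
    induction n with
    | zero => simp
    | succ n ih =>
      have hmem : h ^ (n + 1) ∈ H := pow_mem hh _
      have : b (h ^ (n + 1) * h) = b (h ^ (n + 1)) + b h := hadd _ hmem _ hh
      rw [← pow_succ] at this
      rw [this, ih]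
      push_cast
      ring
  by_contra hne
  have hpos : 0 < |b h| := abs_pos.mpr hne
  obtain ⟨n, hn⟩ := exists_nat_gt (C / |b h|)
  have h1 : ((n : ℝ) + 1) * |b h| ≤ C := by
    have := hb (h ^ (n + 1))
    rw [hpow n, abs_mul] at this
    have : |(n : ℝ) + 1| * |b h| ≤ C := this
    rwa [abs_of_nonneg (by positivity)] at this
  have h2 : C / |b h| < (n : ℝ) + 1 := lt_trans hn (by linarith)
  have h3 : C < ((n : ℝ) + 1) * |b h| := by
    rw [div_lt_iff₀ hpos] at h2; linarith
  linarith

/-- **The map `i_b : H²_b(Γ,H;ℝ) → H²_b(Γ;ℝ)` is an injective, norm non-increasing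
embedding**, stated at the level of cochains: a relative bounded 2-cocycle `z`
(bounded, vanishing on `H × H`, satisfying the cocycle identity) which is the
coboundary of a bounded absolute 1-cochain is already the coboundary of a bounded
1-cochain vanishing on `H` (injectivity); and the seminorm of its absolute class is
at most the seminorm of its relative class (norm non-increasing). -/
theorem relative_to_absolute_injective_norm_nonincreasing {Γ : Type*} [Group Γ]
    (H : Subgroup Γ) (z : Γ → Γ → ℝ)
    (hbdd : ∃ C : ℝ, ∀ g h : Γ, |z g h| ≤ C)
    (hvan : ∀ h₁ ∈ H, ∀ h₂ ∈ H, z h₁ h₂ = 0)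
    (hcoc : ∀ g h k : Γ, z h k - z (g * h) k + z g (h * k) - z g h = 0) :
    -- injectivity of `i_b`
    ((∃ b : Γ → ℝ, (∃ C : ℝ, ∀ g : Γ, |b g| ≤ C) ∧ z = d1 b) →
      ∃ b : Γ → ℝ, (∃ C : ℝ, ∀ g : Γ, |b g| ≤ C) ∧ (∀ h ∈ H, b h = 0) ∧ z = d1 b) ∧
    -- `i_b` is norm non-increasing
    sInf {r : ℝ | ∃ b : Γ → ℝ, (∃ C : ℝ, ∀ g : Γ, |b g| ≤ C) ∧
        r = supNorm2 (fun g h => z g h - d1 b g h)} ≤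
      sInf {r : ℝ | ∃ b : Γ → ℝ, (∃ C : ℝ, ∀ g : Γ, |b g| ≤ C) ∧ (∀ h ∈ H, b h = 0) ∧
        r = supNorm2 (fun g h => z g h - d1 b g h)} := by
  constructor
  · rintro ⟨b, ⟨C, hC⟩, rfl⟩
    refine ⟨b, ⟨C, hC⟩, ?_, rfl⟩
    apply bounded_hom_vanishes H b C hC
    intro h₁ h₁H h₂ h₂H
    have := hvan h₁ h₁H h₂ h₂H
    simp only [d1] at this
    linarith
  · apply csInf_le_csInf
    · refine ⟨0, ?_⟩
      rintro r ⟨b, _, rfl⟩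
      exact Real.iSup_nonneg fun p => abs_nonneg _
    · exact ⟨supNorm2 (fun g h => z g h - d1 (fun _ => 0) g h),
        (fun _ => (0 : ℝ)), ⟨0, fun g => by simp⟩, fun h _ => rfl, rfl⟩
    · rintro r ⟨b, hb, _, hr⟩
      exact ⟨b, hb, hr⟩
end

section
/- Let Γ be a group and H a finite-index subgroup. Then the relative second bounded cohomology H²_b(Γ,H;ℝ) vanishes. -/
open scoped Pointwise

namespace RelH2bAux

variable {Γ : Type*} [Group Γ]

/-- A normalized real 2-cocycle. -/
class IsGC (z : Γ → Γ → ℝ) : Prop where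
  cocycle : ∀ g h k : Γ, z h k - z (g * h) k + z g (h * k) - z g h = 0
  norm_left : ∀ g : Γ, z 1 g = 0
  norm_right : ∀ g : Γ, z g 1 = 0

/-- The central extension of `Γ` by `ℝ` twisted by `z`. -/
@[ext]
structure Tw (z : Γ → Γ → ℝ) where
  g : Γ
  s : ℝ

variable {z : Γ → Γ → ℝ}

instance : One (Tw z) := ⟨⟨1, 0⟩⟩
instance : Mul (Tw z) := ⟨fun a b => ⟨a.g * b.g, a.s + b.s + z a.g b.g⟩⟩
instance : Inv (Tw z) := ⟨fun a => ⟨a.g⁻¹, -a.s - z a.g a.g⁻¹⟩⟩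

@[simp] lemma mul_g (a b : Tw z) : (a * b).g = a.g * b.g := rfl
@[simp] lemma mul_s (a b : Tw z) : (a * b).s = a.s + b.s + z a.g b.g := rfl
@[simp] lemma one_g : (1 : Tw z).g = 1 := rfl
@[simp] lemma one_s : (1 : Tw z).s = 0 := rfl
@[simp] lemma inv_g (a : Tw z) : (a⁻¹).g = a.g⁻¹ := rfl
@[simp] lemma inv_s (a : Tw z) : (a⁻¹).s = -a.s - z a.g a.g⁻¹ := rfl

lemma z_inv_self [IsGC z] (g : Γ) : z g⁻¹ g = z g g⁻¹ := by
  have h := IsGC.cocycle (z := z) g g⁻¹ g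
  rw [mul_inv_cancel, inv_mul_cancel, IsGC.norm_left (z := z) g,
    IsGC.norm_right (z := z) g] at h
  linarith

instance [IsGC z] : Group (Tw z) :=
  Group.ofLeftAxioms
    (fun a b c => by
      have h := IsGC.cocycle (z := z) a.g b.g c.g
      ext
      · exact mul_assoc a.g b.g c.g
      · simp only [mul_s, mul_g]; linarith)
    (fun a => by ext <;> simp [IsGC.norm_left])
    (fun a => by
      ext
      · exact inv_mul_cancel a.g
      · simp only [mul_s, inv_s, inv_g, one_s, z_inv_self a.g]; ring)

/-- Projection to `Γ`. -/
def pr [IsGC z] : Tw z →* Γ := MonoidHom.mk' Tw.g fun _ _ => rfl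

lemma pr_surjective [IsGC z] : Function.Surjective (pr (z := z)) :=
  fun g => ⟨⟨g, 0⟩, rfl⟩

/-- The canonical section (not a homomorphism). -/
def sec (z : Γ → Γ → ℝ) (g : Γ) : Tw z := ⟨g, 0⟩

/-- Central elements. -/
def cen (z : Γ → Γ → ℝ) (t : ℝ) : Tw z := ⟨1, t⟩

lemma cen_mul [IsGC z] (t : ℝ) (x : Tw z) : cen z t * x = x * cen z t := by
  ext <;> simp [cen, IsGC.norm_left, IsGC.norm_right] <;> ring

lemma cen_pow [IsGC z] (k : ℕ) (t : ℝ) : (cen z t) ^ k = cen z (k * t) := by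
  induction k with
  | zero => ext <;> simp [cen]
  | succ n ih =>
      rw [pow_succ, ih]
      ext <;> simp [cen, IsGC.norm_left] <;> push_cast <;> ring

lemma sec_mul [IsGC z] (g h : Γ) :
    sec z g * sec z h = sec z (g * h) * cen z (z g h) := by
  ext <;> simp [sec, cen, IsGC.norm_right]


section
variable [IsGC z] (H : Subgroup Γ)

/-- The pullback of `H` in the extension. -/
def Kz : Subgroup (Tw z) := H.comap pr

/-- The second-coordinate homomorphism on `Kz`. -/
def rho (hvan : ∀ h₁ ∈ H, ∀ h₂ ∈ H, z h₁ h₂ = 0) :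
    (Kz (z := z) H) →* Multiplicative ℝ :=
  MonoidHom.mk' (fun x => Multiplicative.ofAdd x.1.s) (by
    intro a b
    have hz : z a.1.g b.1.g = 0 := hvan _ a.2 _ b.2
    rw [← ofAdd_add]
    exact congrArg Multiplicative.ofAdd
      (by show (a.1 * b.1).s = _; rw [mul_s, hz]; ring))

lemma index_Kz : (Kz (z := z) H).index = H.index :=
  Subgroup.index_comap_of_surjective H pr_surjective

lemma sec_image_mem {S : Set Γ} (hS : Subgroup.IsComplement S (H : Set Γ)) :
    Subgroup.IsComplement (sec z '' S) ((Kz (z := z) H : Subgroup (Tw z)) : Set (Tw z)) := by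
  rw [Subgroup.isComplement_iff_existsUnique_inv_mul_mem] at hS ⊢
  intro x
  obtain ⟨s, hs, huniq⟩ := hS x.g
  refine ⟨⟨sec z ↑s, Set.mem_image_of_mem _ s.2⟩, ?_, ?_⟩
  · exact hs
  · rintro ⟨t, γ, hγ, rfl⟩ h
    have h' : (↑(⟨γ, hγ⟩ : S))⁻¹ * x.g ∈ H := h
    have := huniq ⟨γ, hγ⟩ h'
    exact Subtype.ext (congrArg (sec z) (congrArg Subtype.val this))

lemma transfer_cen (hvan : ∀ h₁ ∈ H, ∀ h₂ ∈ H, z h₁ h₂ = 0)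
    [(Kz (z := z) H).FiniteIndex] (t : ℝ) :
    MonoidHom.transfer (rho H hvan) (cen z t)
      = Multiplicative.ofAdd (((Kz (z := z) H).index : ℝ) * t) := by
  have key : ∀ (k : ℕ) (g₀ : Tw z), g₀⁻¹ * (cen z t) ^ k * g₀ ∈ Kz (z := z) H →
      g₀⁻¹ * (cen z t) ^ k * g₀ = (cen z t) ^ k := by
    intro k g₀ _
    rw [cen_pow, mul_assoc, cen_mul, inv_mul_cancel_left]
  rw [MonoidHom.transfer_eq_pow (rho H hvan) (cen z t) key]
  show Multiplicative.ofAdd (((cen z t) ^ (Kz (z := z) H).index : Tw z).s) = _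
  rw [cen_pow]
  rfl


open Subgroup.IsComplement in
lemma abs_toAdd_transfer_sec_le (hvan : ∀ h₁ ∈ H, ∀ h₂ ∈ H, z h₁ h₂ = 0)
    [(Kz (z := z) H).FiniteIndex] {C : ℝ} (hC : ∀ g h : Γ, |z g h| ≤ C) (g : Γ) :
    |Multiplicative.toAdd (MonoidHom.transfer (rho H hvan) (sec z g))|
      ≤ ((Kz (z := z) H).index : ℝ) * (3 * C) := by
  classical
  set K := Kz (z := z) H with hK
  letI := K.fintypeQuotientOfFiniteIndex
  let S : H.LeftTransversal := default
  let T : (K : Subgroup (Tw z)).LeftTransversal :=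
    ⟨sec z '' (S : Set Γ), sec_image_mem H S.2⟩
  rw [MonoidHom.transfer_def (rho H hvan) T (sec z g)]
  unfold Subgroup.leftTransversals.diff
  rw [toAdd_prod]
  refine le_trans (Finset.abs_sum_le_sum_abs _ _) ?_
  have hcard : (Finset.univ (α := Tw z ⧸ K)).card = K.index := by
    rw [Finset.card_univ, ← Nat.card_eq_fintype_card, ← Subgroup.index_eq_card]
  refine le_trans (Finset.sum_le_card_nsmul _ _ (3 * C) ?_) ?_
  · intro q _
    show |((↑(leftQuotientEquiv T.2 q) : Tw z)⁻¹ * (↑(leftQuotientEquiv ((sec z g) • T).2 q) : Tw z)).s| ≤ 3 * C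
    have h1 : (↑(leftQuotientEquiv T.2 q) : Tw z) ∈ sec z '' (S : Set Γ) := (leftQuotientEquiv T.2 q).2
    have h2 : (↑(leftQuotientEquiv ((sec z g) • T).2 q) : Tw z) ∈ (sec z g) • (sec z '' (S : Set Γ)) :=
      (leftQuotientEquiv ((sec z g) • T).2 q).2
    obtain ⟨γ, -, hγe⟩ := h1
    obtain ⟨y, ⟨δ, -, rfl⟩, hye⟩ := h2
    rw [← hγe, ← hye]
    simp only [smul_eq_mul]
    have hs : ((sec z γ)⁻¹ * (sec z g * sec z δ) : Tw z).s
        = -(z γ γ⁻¹) + z g δ + z γ⁻¹ (g * δ) := by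
      simp [sec]
    rw [hs]
    have b1 := hC γ γ⁻¹
    have b2 := hC g δ
    have b3 := hC γ⁻¹ (g * δ)
    calc |(-(z γ γ⁻¹) + z g δ) + z γ⁻¹ (g * δ)|
        ≤ |(-(z γ γ⁻¹) + z g δ)| + |z γ⁻¹ (g * δ)| := abs_add_le _ _
      _ ≤ (|(-(z γ γ⁻¹))| + |z g δ|) + |z γ⁻¹ (g * δ)| := by
          have := abs_add_le (-(z γ γ⁻¹)) (z g δ); linarith
      _ ≤ 3 * C := by rw [abs_neg]; linarith
  · rw [hcard, nsmul_eq_mul]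

end

end RelH2bAux

/-- **Vanishing of relative second bounded cohomology for finite-index subgroups.**
If `H` has finite index in `Γ` then `H²_b(Γ,H;ℝ) = 0`: every relative bounded
2-cocycle (bounded, vanishing on `H × H`, satisfying the cocycle identity) is the
coboundary of a bounded 1-cochain vanishing on `H`. -/
theorem relative_H2b_vanishes_of_finiteIndex {Γ : Type*} [Group Γ] (H : Subgroup Γ)
    (hfin : H.index ≠ 0) :
    ∀ z : Γ → Γ → ℝ,
      (∃ C : ℝ, ∀ g h : Γ, |z g h| ≤ C) →
      (∀ h₁ ∈ H, ∀ h₂ ∈ H, z h₁ h₂ = 0) →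
      (∀ g h k : Γ, z h k - z (g * h) k + z g (h * k) - z g h = 0) →
      ∃ b : Γ → ℝ, (∃ C : ℝ, ∀ g : Γ, |b g| ≤ C) ∧ (∀ h ∈ H, b h = 0) ∧ z = d1 b := by
  intro z hCex hvan hcoc
  obtain ⟨C, hC⟩ := hCex
  have h11 : z 1 1 = 0 := hvan 1 H.one_mem 1 H.one_mem
  haveI : RelH2bAux.IsGC z := by
    refine ⟨hcoc, fun g => ?_, fun g => ?_⟩
    · have h := hcoc 1 1 g
      rw [one_mul, one_mul, h11] at h
      linarith
    · have h := hcoc g 1 1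
      rw [mul_one, mul_one, h11] at h
      linarith
  have hKind : (RelH2bAux.Kz (z := z) H).index = H.index := RelH2bAux.index_Kz H
  haveI : (RelH2bAux.Kz (z := z) H).FiniteIndex := ⟨by rw [hKind]; exact hfin⟩
  have hm0 : ((H.index : ℝ)) ≠ 0 := Nat.cast_ne_zero.mpr hfin
  have hmpos : (0:ℝ) < (H.index : ℝ) := by
    exact_mod_cast Nat.pos_of_ne_zero hfin
  set φ := MonoidHom.transfer (RelH2bAux.rho H hvan) with hφ
  set b : Γ → ℝ :=
    fun g => Multiplicative.toAdd (φ (RelH2bAux.sec z g)) / (H.index : ℝ) with hbdef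
  -- boundedness
  have hbound : ∀ g : Γ, |b g| ≤ 3 * C := by
    intro g
    have h := RelH2bAux.abs_toAdd_transfer_sec_le H hvan hC g
    rw [hKind] at h
    rw [hbdef]
    rw [abs_div, abs_of_pos hmpos, div_le_iff₀ hmpos]
    calc |Multiplicative.toAdd (φ (RelH2bAux.sec z g))| ≤ (H.index : ℝ) * (3 * C) := h
      _ = 3 * C * (H.index : ℝ) := by ring
  -- the coboundary identity
  have hmul : ∀ g h : Γ, Multiplicative.toAdd (φ (RelH2bAux.sec z g))
      + Multiplicative.toAdd (φ (RelH2bAux.sec z h))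
      = Multiplicative.toAdd (φ (RelH2bAux.sec z (g * h))) + (H.index : ℝ) * z g h := by
    intro g h
    have e2 : φ (RelH2bAux.sec z g) * φ (RelH2bAux.sec z h)
        = φ (RelH2bAux.sec z (g * h)) * φ (RelH2bAux.cen z (z g h)) := by
      rw [hφ, ← map_mul, ← map_mul, RelH2bAux.sec_mul]
    rw [RelH2bAux.transfer_cen H hvan (z g h)] at e2
    have := congrArg Multiplicative.toAdd e2
    simpa [hKind] using this
  have hd1 : z = d1 b := by
    funext g h
    have h1 := hmul g h
    simp only [d1, hbdef]
    field_simp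
    linarith
  -- vanishing on H
  have hb1 : b 1 = 0 := by
    have := congrFun (congrFun hd1 1) 1
    simp only [d1, one_mul] at this
    rw [h11] at this
    linarith
  have hvb : ∀ h ∈ H, b h = 0 := by
    intro h hh
    have hpow : ∀ k : ℕ, b (h ^ k) = k * b h := by
      intro k
      induction k with
      | zero => simpa using hb1
      | succ n ih =>
          have hd := congrFun (congrFun hd1 (h ^ n)) h
          simp only [d1] at hd
          rw [hvan _ (pow_mem hh n) _ hh] at hd
          rw [pow_succ]
          push_cast
          linarith
    by_contra hne
    obtain ⟨k, hk⟩ := exists_nat_gt (3 * C / |b h|)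
    have habs : (0:ℝ) < |b h| := abs_pos.mpr hne
    have h1 : 3 * C < (k : ℝ) * |b h| := (div_lt_iff₀ habs).mp hk
    have h2 : |b (h ^ k)| ≤ 3 * C := hbound _
    rw [hpow k, abs_mul, Nat.abs_cast] at h2
    linarith
  exact ⟨b, ⟨3 * C, hbound⟩, hvb, hd1⟩
end

section
/- Let Γ be a group and H a subgroup. The sequence 0 → QM₀(Γ,H) → QM(Γ,H) → H²_b(Γ,H;ℝ) → H²(Γ,H;ℝ) is exact, where the middle map sends f to the class of d¹f and the last map is the comparison map. In particular, the kernel of the relative comparison map H²_b(Γ,H;ℝ) → H²(Γ,H;ℝ) is canonically isomorphic to QM(Γ,H)/(C¹_b(Γ,H) ⊕ Hom(Γ,H;ℝ)). -/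
/-- **Exactness of `0 → QM₀(Γ,H) → QM(Γ,H) → H²_b(Γ,H;ℝ) → H²(Γ,H;ℝ)`**, stated at
the level of cochains.  Exactness at `QM(Γ,H)`: a quasimorphism `f` vanishing on `H`
maps to the zero relative bounded class iff `f ∈ QM₀(Γ,H) = C¹_b(Γ,H) ⊕ Hom(Γ,H;ℝ)`.
Exactness at `H²_b(Γ,H;ℝ)`: a relative bounded 2-cocycle `z` is killed by the
comparison map (i.e. it is the coboundary of some relative 1-cochain) iff its class
comes from a relative quasimorphism (i.e. `z` differs from the coboundary of some
`f ∈ QM(Γ,H)` by a relative bounded coboundary).  In particular the kernel of the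
relative comparison map is `QM(Γ,H)/(C¹_b(Γ,H) ⊕ Hom(Γ,H;ℝ))`. -/
theorem exact_sequence_relative_quasimorphisms {Γ : Type*} [Group Γ] (H : Subgroup Γ) :
    -- exactness at QM(Γ,H)
    (∀ f : Γ → ℝ, (∃ C : ℝ, ∀ g h : Γ, |f (g * h) - f g - f h| ≤ C) → (∀ h ∈ H, f h = 0) →
      ((∃ α : Γ → ℝ, (∃ C : ℝ, ∀ g : Γ, |α g| ≤ C) ∧ (∀ h ∈ H, α h = 0) ∧ d1 f = d1 α) ↔
        (∃ α ρ : Γ → ℝ, (∃ C : ℝ, ∀ g : Γ, |α g| ≤ C) ∧ (∀ h ∈ H, α h = 0) ∧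
          (∀ g h : Γ, ρ (g * h) = ρ g + ρ h) ∧ (∀ h ∈ H, ρ h = 0) ∧ f = α + ρ))) ∧
    -- exactness at H²_b(Γ,H;ℝ)
    (∀ z : Γ → Γ → ℝ, (∃ C : ℝ, ∀ g h : Γ, |z g h| ≤ C) →
      (∀ h₁ ∈ H, ∀ h₂ ∈ H, z h₁ h₂ = 0) →
      (∀ g h k : Γ, z h k - z (g * h) k + z g (h * k) - z g h = 0) →
      ((∃ ξ : Γ → ℝ, (∀ h ∈ H, ξ h = 0) ∧ z = d1 ξ) ↔
        (∃ f α : Γ → ℝ, (∃ C : ℝ, ∀ g h : Γ, |f (g * h) - f g - f h| ≤ C) ∧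
          (∀ h ∈ H, f h = 0) ∧ (∃ C : ℝ, ∀ g : Γ, |α g| ≤ C) ∧ (∀ h ∈ H, α h = 0) ∧
          z = d1 (f + α)))) := by
  constructor
  · intro f _hqm hf0
    constructor
    · rintro ⟨α, hαb, hα0, hd⟩
      refine ⟨α, f - α, hαb, hα0, ?_, ?_, by ext g; simp⟩
      · intro g h
        have := congrFun (congrFun hd g) h
        simp only [d1] at this
        simp only [Pi.sub_apply]
        linarith
      · intro h hh
        simp [Pi.sub_apply, hf0 h hh, hα0 h hh]
    · rintro ⟨α, ρ, hαb, hα0, hρhom, hρ0, rfl⟩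
      refine ⟨α, hαb, hα0, ?_⟩
      funext g h
      simp only [d1, Pi.add_apply, hρhom g h]
      ring
  · intro z hzb _hz0 _hcoc
    constructor
    · rintro ⟨ξ, hξ0, rfl⟩
      obtain ⟨C, hC⟩ := hzb
      refine ⟨ξ, 0, ⟨C, fun g h => ?_⟩, hξ0, ⟨0, by simp⟩, by simp, by simp⟩
      have := hC g h
      simp only [d1] at this
      rw [show ξ (g * h) - ξ g - ξ h = -(ξ g + ξ h - ξ (g * h)) by ring, abs_neg]
      exact this
    · rintro ⟨f, α, _hqm, hf0, _hαb, hα0, rfl⟩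
      exact ⟨f + α, fun h hh => by simp [hf0 h hh, hα0 h hh], rfl⟩
end
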